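/- arXiv:1012.0093 — 7 statements merged into one kernel-verified Lean document; each statement's English description precedes it below -/
import Mathlib

section
/- Let ρ be a completely selfdecomposable distribution on ℝ^d with spectral measure Γ_ρ on (0,2), i.e., its Lévy measure is ν_ρ(B) = ∫_{(0,2)} Γ_ρ(dβ) ∫_S λ_β(dξ) ∫_0^∞ 1_B(rξ) r^{-β-1} dr. Then for α ∈ (0,2), ∫_{|x|>1} |x|^α ν_ρ(dx) < ∞ if and only if Γ_ρ((0,α]) = 0 and ∫_{(α,2)} (β-α)^{-1} Γ_ρ(dβ) < ∞. -/
open MeasureTheory Set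
open scoped ENNReal

lemma radial_lintegral (p : ℝ) :
    ∫⁻ r in Set.Ioi (1:ℝ), ENNReal.ofReal (r ^ p) =
      if p < -1 then ENNReal.ofReal ((-1 - p)⁻¹) else ⊤ := by
  have hnn : 0 ≤ᵐ[volume.restrict (Ioi (1:ℝ))] fun r : ℝ => r ^ p := by
    filter_upwards [ae_restrict_mem measurableSet_Ioi] with r hr
    exact Real.rpow_nonneg (le_of_lt (lt_trans one_pos hr)) p
  by_cases hp : p < -1
  · rw [if_pos hp]
    have hint : IntegrableOn (fun r : ℝ => r ^ p) (Ioi 1) :=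
      integrableOn_Ioi_rpow_of_lt hp one_pos
    rw [← ofReal_integral_eq_lintegral_ofReal hint hnn,
      integral_Ioi_rpow_of_lt hp one_pos, Real.one_rpow]
    congr 1
    have h1 : p + 1 ≠ 0 := by linarith
    have h2 : -1 - p ≠ 0 := by linarith
    field_simp
    ring
  · rw [if_neg hp]
    by_contra hne
    have hlt : ∫⁻ r in Set.Ioi (1:ℝ), ENNReal.ofReal (r ^ p) < ⊤ := lt_top_iff_ne_top.mpr hne
    have hmeas : Measurable fun r : ℝ => r ^ p := measurable_id.pow measurable_const
    have : IntegrableOn (fun r : ℝ => r ^ p) (Ioi 1) := by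
      refine ⟨hmeas.aestronglyMeasurable, ?_⟩
      rw [hasFiniteIntegral_iff_ofReal hnn]
      exact hlt
    rw [integrableOn_Ioi_rpow_iff one_pos] at this
    exact hp this

/-- Let `ν` be the Lévy measure of a completely selfdecomposable distribution, given in
polar form by a spectral measure `Γ` on `(0,2)` and a measurable family `lam` of probability
measures on the unit sphere.  For `α ∈ (0,2)`:
`∫_{|x|>1} |x|^α ν(dx) < ∞  ↔  Γ((0,α]) = 0 ∧ ∫_{(α,2)} (β-α)⁻¹ Γ(dβ) < ∞`. -/
theorem stmt2 (d : ℕ) (α : ℝ) (hα : α ∈ Set.Ioo (0:ℝ) 2)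
    (Γ : Measure ℝ) (lam : ℝ → Measure (EuclideanSpace ℝ (Fin d)))
    (hprob : ∀ β ∈ Set.Ioo (0:ℝ) 2, IsProbabilityMeasure (lam β))
    (hsph : ∀ β ∈ Set.Ioo (0:ℝ) 2, lam β {ξ : EuclideanSpace ℝ (Fin d) | ‖ξ‖ = 1} = 1)
    (hmeas : ∀ B : Set (EuclideanSpace ℝ (Fin d)), MeasurableSet B →
      Measurable (fun β => lam β B))
    (hΓ : ∫⁻ β in Set.Ioo (0:ℝ) 2, ENNReal.ofReal (β⁻¹ + (2 - β)⁻¹) ∂Γ < ⊤)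
    (ν : Measure (EuclideanSpace ℝ (Fin d)))
    (hν : ∀ B : Set (EuclideanSpace ℝ (Fin d)), MeasurableSet B →
      ν B = ∫⁻ β in Set.Ioo (0:ℝ) 2,
        (∫⁻ ξ, (∫⁻ r in Set.Ioi (0:ℝ),
          Set.indicator B (fun _ => (1:ℝ≥0∞)) (r • ξ) * ENNReal.ofReal (r ^ (-β - 1)))
            ∂(lam β)) ∂Γ) :
    (∫⁻ x in {x : EuclideanSpace ℝ (Fin d) | 1 < ‖x‖}, ENNReal.ofReal (‖x‖ ^ α) ∂ν < ⊤) ↔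
      (Γ (Set.Ioc 0 α) = 0 ∧ ∫⁻ β in Set.Ioo α 2, ENNReal.ofReal ((β - α)⁻¹) ∂Γ < ⊤) := by
  classical
  obtain ⟨hα0, hα2⟩ := hα
  set E := EuclideanSpace ℝ (Fin d)
  set lam' : ℝ → Measure E := fun β => if β ∈ Ioo (0:ℝ) 2 then lam β else 0 with hlamdef
  have hlam' : ∀ β ∈ Ioo (0:ℝ) 2, lam' β = lam β := fun β h => if_pos h
  have hlam'meas : ∀ B : Set E, MeasurableSet B → Measurable fun β => lam' β B := by
    intro B hB
    have : (fun β => lam' β B) = fun β => if β ∈ Ioo (0:ℝ) 2 then lam β B else 0 := by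
      funext β
      simp only [hlamdef]
      split_ifs <;> simp
    rw [this]
    exact Measurable.ite measurableSet_Ioo (hmeas B hB) measurable_const
  set w : ℝ → ℝ → ℝ≥0∞ := fun β r => ENNReal.ofReal (r ^ (-β - 1)) with hw
  have hwmeas : ∀ β, Measurable (w β) := fun β =>
    ENNReal.measurable_ofReal.comp (measurable_id.pow measurable_const)
  have hsmul : ∀ ξ : E, Measurable fun r : ℝ => r • ξ := fun ξ =>
    (continuous_id.smul continuous_const).measurable
  set m : ℝ → E → Measure E := fun β ξ =>
    (((volume.restrict (Ioi (0:ℝ))).withDensity (w β)).map (fun r => r • ξ)) with hmdef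
  have hm_apply : ∀ β (ξ : E) (B : Set E), MeasurableSet B →
      m β ξ B = ∫⁻ r in Ioi (0:ℝ), B.indicator (fun _ => (1:ℝ≥0∞)) (r • ξ) * w β r := by
    intro β ξ B hB
    rw [hmdef]
    rw [Measure.map_apply (hsmul ξ) hB, withDensity_apply _ ((hsmul ξ) hB)]
    have : ∀ r : ℝ, B.indicator (fun _ => (1:ℝ≥0∞)) (r • ξ) * w β r
        = ((fun r : ℝ => r • ξ) ⁻¹' B).indicator (w β) r := by
      intro r
      by_cases h : r • ξ ∈ B <;>
        simp [Set.indicator_apply, Set.mem_preimage, h]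
    simp_rw [this]
    rw [lintegral_indicator ((hsmul ξ) hB)]
  have hm_lint : ∀ β (ξ : E) (f : E → ℝ≥0∞), Measurable f →
      ∫⁻ x, f x ∂(m β ξ) = ∫⁻ r in Ioi (0:ℝ), w β r * f (r • ξ) := by
    intro β ξ f hf
    rw [hmdef]
    rw [lintegral_map hf (hsmul ξ),
      lintegral_withDensity_eq_lintegral_mul _ (hwmeas β)
        (show Measurable fun r : ℝ => f (r • ξ) from hf.comp (hsmul ξ))]
    rfl
  have hm_meas : ∀ β, Measurable (m β) := by
    intro β
    refine Measure.measurable_of_measurable_coe _ fun B hB => ?_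
    simp_rw [hm_apply β _ B hB]
    refine Measurable.lintegral_prod_right' (f := fun p : E × ℝ =>
      B.indicator (fun _ => (1:ℝ≥0∞)) (p.2 • p.1) * w β p.2) ?_
    exact ((measurable_const.indicator hB).comp
      ((continuous_snd.smul continuous_fst).measurable)).mul
      ((hwmeas β).comp measurable_snd)
  set κ : ProbabilityTheory.Kernel ℝ E :=
    ⟨lam', Measure.measurable_of_measurable_coe _ fun s hs => hlam'meas s hs⟩ with hκ
  haveI : ProbabilityTheory.IsFiniteKernel κ := by
    refine ⟨⟨1, ENNReal.one_lt_top, fun β => ?_⟩⟩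
    show lam' β Set.univ ≤ 1
    simp only [hlamdef]
    split_ifs with h
    · haveI := hprob β h
      simp
    · simp
  set μ : ℝ → Measure E := fun β => (lam' β).bind (m β) with hμdef
  have hμ_apply : ∀ β (B : Set E), MeasurableSet B →
      μ β B = ∫⁻ ξ, m β ξ B ∂(lam' β) := fun β B hB =>
    Measure.bind_apply hB (hm_meas β).aemeasurable
  have hμ_meas : Measurable μ := by
    refine Measure.measurable_of_measurable_coe _ fun B hB => ?_
    simp_rw [hμ_apply _ B hB]
    have hjoint : Measurable fun p : ℝ × E => m p.1 p.2 B := by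
      have : ∀ p : ℝ × E, m p.1 p.2 B
          = ∫⁻ r in Ioi (0:ℝ), B.indicator (fun _ => (1:ℝ≥0∞)) (r • p.2) * w p.1 r :=
        fun p => hm_apply p.1 p.2 B hB
      simp_rw [this]
      refine Measurable.lintegral_prod_right' (f := fun q : (ℝ × E) × ℝ =>
        B.indicator (fun _ => (1:ℝ≥0∞)) (q.2 • q.1.2) * w q.1.1 q.2) ?_
      refine Measurable.mul ?_ ?_
      · exact (measurable_const.indicator hB).comp
          (continuous_snd.smul continuous_fst.snd).measurable
      · exact ENNReal.measurable_ofReal.comp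
          (measurable_snd.pow (measurable_fst.fst.neg.sub measurable_const))
    exact Measurable.lintegral_kernel_prod_right' (κ := κ) hjoint
  have hν' : ν = (Γ.restrict (Ioo 0 2)).bind μ := by
    ext B hB
    rw [hν B hB, Measure.bind_apply hB hμ_meas.aemeasurable]
    refine setLIntegral_congr_fun measurableSet_Ioo (fun β hβ => ?_)
    rw [hμ_apply β B hB, hlam' β hβ]
    exact lintegral_congr fun ξ => (hm_apply β ξ B hB).symm
  set S : Set E := {x : E | 1 < ‖x‖} with hS
  have hSmeas : MeasurableSet S := (isOpen_lt continuous_const continuous_norm).measurableSet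
  set f : E → ℝ≥0∞ := S.indicator (fun x => ENNReal.ofReal (‖x‖ ^ α)) with hfdef
  have hf : Measurable f :=
    (ENNReal.measurable_ofReal.comp (measurable_norm.pow measurable_const)).indicator hSmeas
  set c : ℝ → ℝ≥0∞ := fun β => if α < β then ENNReal.ofReal ((β - α)⁻¹) else ⊤ with hc
  have key : ∀ β ∈ Ioo (0:ℝ) 2, ∫⁻ ξ, (∫⁻ x, f x ∂(m β ξ)) ∂(lam β) = c β := by
    intro β hβ
    haveI prob := hprob β hβ
    have hsphmeas : MeasurableSet {ξ : E | ‖ξ‖ = 1} :=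
      (continuous_norm.measurable (measurableSet_singleton 1) : _)
    have hae : ∀ᵐ ξ ∂(lam β), ‖ξ‖ = 1 := by
      rw [ae_iff]
      have h' : {ξ : E | ¬ ‖ξ‖ = 1} = {ξ : E | ‖ξ‖ = 1}ᶜ := rfl
      rw [h', measure_compl hsphmeas (measure_ne_top _ _), hsph β hβ, measure_univ]
      simp
    have hval : ∀ ξ : E, ‖ξ‖ = 1 → ∫⁻ x, f x ∂(m β ξ) = c β := by
      intro ξ hξ
      rw [hm_lint β ξ f hf]
      have heq : ∀ r ∈ Ioi (0:ℝ), w β r * f (r • ξ)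
          = (Ioi (1:ℝ)).indicator (fun r => ENNReal.ofReal (r ^ (α - β - 1))) r := by
        intro r hr
        have hr0 : (0:ℝ) < r := hr
        have hnorm : ‖r • ξ‖ = r := by
          rw [norm_smul, hξ, mul_one, Real.norm_eq_abs, abs_of_pos hr0]
        by_cases h1 : 1 < r
        · have hmem : r • ξ ∈ S := by rw [hS, Set.mem_setOf_eq, hnorm]; exact h1
          rw [Set.indicator_of_mem (show r ∈ Ioi (1:ℝ) from h1), hfdef]
          simp only [Set.indicator_of_mem hmem]
          rw [hnorm, hw, ← ENNReal.ofReal_mul (Real.rpow_nonneg hr0.le _),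
            ← Real.rpow_add hr0]
          ring_nf
        · have hmem : r • ξ ∉ S := by
            rw [hS, Set.mem_setOf_eq, hnorm]; exact h1
          rw [Set.indicator_of_notMem (show r ∉ Ioi (1:ℝ) from h1), hfdef]
          simp only [Set.indicator_of_notMem hmem]
          rw [mul_zero]
      rw [setLIntegral_congr_fun measurableSet_Ioi heq,
        lintegral_indicator measurableSet_Ioi, Measure.restrict_restrict measurableSet_Ioi,
        Set.inter_eq_left.mpr (Ioi_subset_Ioi zero_le_one), radial_lintegral]
      simp only [hc]
      by_cases hαβ : α < β
      · rw [if_pos (show α - β - 1 < -1 by linarith), if_pos hαβ]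
        congr 2
        ring
      · rw [if_neg (show ¬ α - β - 1 < -1 by intro h; exact hαβ (by linarith)), if_neg hαβ]
    calc ∫⁻ ξ, (∫⁻ x, f x ∂(m β ξ)) ∂(lam β) = ∫⁻ _, c β ∂(lam β) := by
          refine lintegral_congr_ae ?_
          filter_upwards [hae] with ξ hξ using hval ξ hξ
      _ = c β := by rw [lintegral_const, measure_univ, mul_one]
  have main : ∫⁻ x in S, ENNReal.ofReal (‖x‖ ^ α) ∂ν = ∫⁻ β in Ioo (0:ℝ) 2, c β ∂Γ := by
    rw [← lintegral_indicator hSmeas, ← hfdef, hν', Measure.lintegral_bind hμ_meas.aemeasurable hf.aemeasurable]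
    refine setLIntegral_congr_fun measurableSet_Ioo (fun β hβ => ?_)
    rw [hμdef]
    rw [Measure.lintegral_bind (hm_meas β).aemeasurable hf.aemeasurable, hlam' β hβ]
    exact key β hβ
  rw [main]
  have hsplit : Ioo (0:ℝ) 2 = Ioc 0 α ∪ Ioo α 2 := by
    ext x
    simp only [mem_Ioo, mem_Ioc, mem_union]
    constructor
    · rintro ⟨h1, h2⟩
      rcases le_or_gt x α with h | h
      · exact Or.inl ⟨h1, h⟩
      · exact Or.inr ⟨h, h2⟩
    · rintro (⟨h1, h2⟩ | ⟨h1, h2⟩) <;> constructor <;> linarith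
  have hdisj : Disjoint (Ioc (0:ℝ) α) (Ioo α 2) :=
    Set.disjoint_left.mpr fun x hx hx' => absurd hx.2 (not_le.mpr hx'.1)
  rw [hsplit, lintegral_union measurableSet_Ioo hdisj]
  have h1 : ∫⁻ β in Ioc (0:ℝ) α, c β ∂Γ = ⊤ * Γ (Ioc 0 α) := by
    rw [setLIntegral_congr_fun measurableSet_Ioc
      (fun β hβ => if_neg (not_lt.mpr hβ.2)), setLIntegral_const]
  have h2 : ∫⁻ β in Ioo α 2, c β ∂Γ = ∫⁻ β in Ioo α 2, ENNReal.ofReal ((β - α)⁻¹) ∂Γ :=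
    setLIntegral_congr_fun measurableSet_Ioo (fun β hβ => if_pos hβ.1)
  rw [h1, h2, ENNReal.add_lt_top]
  have htop : ⊤ * Γ (Ioc 0 α) < ⊤ ↔ Γ (Ioc 0 α) = 0 := by
    constructor
    · intro h
      by_contra hne
      rw [ENNReal.top_mul hne] at h
      exact lt_irrefl _ h
    · intro h; simp [h]
  rw [htop]
end

section
/- Let ν be a Lévy measure on ℝ^d of the form ν(B) = ∫_{(0,2)} Γ(dβ) ∫_S λ_β(dξ) ∫_0^∞ 1_B(rξ) r^{-β-1} dr. Then ∫_{|x|>1} log|x| ν(dx) < ∞ if and only if ∫_{(0,2)} β^{-2} Γ(dβ) < ∞. -/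
open MeasureTheory Set
open scoped ENNReal


lemma aux1 (β c : ℝ) (hβ : 0 < β) (hc : 0 < c) :
    ∫⁻ r in Ioi c, ENNReal.ofReal (r ^ (-β - 1)) = ENNReal.ofReal (c ^ (-β) * β⁻¹) := by
  rw [← ofReal_integral_eq_lintegral_ofReal (integrableOn_Ioi_rpow_of_lt (by linarith) hc)
    ((ae_restrict_iff' measurableSet_Ioi).mpr (ae_of_all _ fun r hr =>
      Real.rpow_nonneg (le_of_lt (hc.trans hr)) _))]
  rw [integral_Ioi_rpow_of_lt (by linarith) hc]
  congr 1
  rw [show -β - 1 + 1 = -β by ring]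
  field_simp

lemma aux2 (β : ℝ) (hβ : 0 < β) :
    ∫⁻ t in Ioi (0:ℝ), ENNReal.ofReal (Real.exp (-β * t) * β⁻¹)
      = ENNReal.ofReal ((β ^ 2)⁻¹) := by
  have hderiv : ∀ x ∈ Ici (0:ℝ),
      HasDerivAt (fun t => -Real.exp (-β * t) / β ^ 2) (Real.exp (-β * x) * β⁻¹) x := by
    intro x _
    have h1 : HasDerivAt (fun t : ℝ => -β * t) (-β) x := by
      simpa using (hasDerivAt_id x).const_mul (-β)
    have h2 := (h1.exp).neg.div_const (β ^ 2)
    refine h2.congr_deriv ?_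
    field_simp
  have hnn : ∀ x ∈ Ioi (0:ℝ), 0 ≤ Real.exp (-β * x) * β⁻¹ := fun x _ =>
    mul_nonneg (Real.exp_nonneg _) (inv_nonneg.mpr hβ.le)
  have htend : Filter.Tendsto (fun t => -Real.exp (-β * t) / β ^ 2) Filter.atTop (nhds 0) := by
    have h1 : Filter.Tendsto (fun t : ℝ => -β * t) Filter.atTop Filter.atBot :=
      (Filter.tendsto_const_mul_atBot_of_neg (by linarith)).mpr Filter.tendsto_id
    simpa using ((Real.tendsto_exp_atBot.comp h1).neg.div_const (β ^ 2))
  have key := integral_Ioi_of_hasDerivAt_of_nonneg' hderiv hnn htend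
  have hint := integrableOn_Ioi_deriv_of_nonneg' hderiv hnn htend
  rw [← ofReal_integral_eq_lintegral_ofReal hint (ae_of_all _ fun x =>
    mul_nonneg (Real.exp_nonneg _) (inv_nonneg.mpr hβ.le)), key]
  norm_num [Real.exp_zero, neg_div, neg_neg, one_div]

/-- Let `ν` be a Lévy measure in completely-selfdecomposable polar form with spectral
measure `Γ` on `(0,2)`.  Then `∫_{|x|>1} log|x| ν(dx) < ∞ ↔ ∫_{(0,2)} β⁻² Γ(dβ) < ∞`. -/
theorem stmt3 (d : ℕ)
    (Γ : Measure ℝ) (lam : ℝ → Measure (EuclideanSpace ℝ (Fin d)))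
    (hprob : ∀ β ∈ Set.Ioo (0:ℝ) 2, IsProbabilityMeasure (lam β))
    (hsph : ∀ β ∈ Set.Ioo (0:ℝ) 2, lam β {ξ : EuclideanSpace ℝ (Fin d) | ‖ξ‖ = 1} = 1)
    (hmeas : ∀ B : Set (EuclideanSpace ℝ (Fin d)), MeasurableSet B →
      Measurable (fun β => lam β B))
    (hΓ : ∫⁻ β in Set.Ioo (0:ℝ) 2, ENNReal.ofReal (β⁻¹ + (2 - β)⁻¹) ∂Γ < ⊤)
    (ν : Measure (EuclideanSpace ℝ (Fin d)))
    (hν : ∀ B : Set (EuclideanSpace ℝ (Fin d)), MeasurableSet B →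
      ν B = ∫⁻ β in Set.Ioo (0:ℝ) 2,
        (∫⁻ ξ, (∫⁻ r in Set.Ioi (0:ℝ),
          Set.indicator B (fun _ => (1:ℝ≥0∞)) (r • ξ) * ENNReal.ofReal (r ^ (-β - 1)))
            ∂(lam β)) ∂Γ) :
    (∫⁻ x in {x : EuclideanSpace ℝ (Fin d) | 1 < ‖x‖},
        ENNReal.ofReal (Real.log ‖x‖) ∂ν < ⊤) ↔
      ∫⁻ β in Set.Ioo (0:ℝ) 2, ENNReal.ofReal ((β ^ 2)⁻¹) ∂Γ < ⊤ := by
  have hA : MeasurableSet {x : EuclideanSpace ℝ (Fin d) | 1 < ‖x‖} :=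
    (isOpen_lt continuous_const continuous_norm).measurableSet
  -- Γ restricted to (0,2) is a finite measure
  haveI hfin : IsFiniteMeasure (Γ.restrict (Ioo (0:ℝ) 2)) := by
    constructor
    rw [Measure.restrict_apply_univ]
    calc Γ (Ioo 0 2) = ∫⁻ _ in Ioo (0:ℝ) 2, 1 ∂Γ := by simp
      _ ≤ ∫⁻ β in Ioo (0:ℝ) 2, ENNReal.ofReal (β⁻¹ + (2 - β)⁻¹) ∂Γ := by
          refine setLIntegral_mono
            ((measurable_inv.add ((measurable_const.sub measurable_id).inv)).ennreal_ofReal)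
            fun β hβ => ?_
          rw [show (1:ℝ≥0∞) = ENNReal.ofReal 1 by simp]
          apply ENNReal.ofReal_le_ofReal
          have h1 : (2:ℝ)⁻¹ ≤ β⁻¹ := inv_anti₀ hβ.1 hβ.2.le
          have h2 : (2:ℝ)⁻¹ ≤ (2 - β)⁻¹ := inv_anti₀ (by linarith [hβ.2]) (by linarith [hβ.1])
          linarith
      _ < ⊤ := hΓ
  -- key formula for measure of the set {exp t < ‖x‖}
  have hν' : ∀ t : ℝ, 0 < t → ν {x | Real.exp t < ‖x‖}
      = ∫⁻ β in Ioo (0:ℝ) 2, ENNReal.ofReal (Real.exp (-β * t) * β⁻¹) ∂Γ := by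
    intro t ht
    have hBm : MeasurableSet {x : EuclideanSpace ℝ (Fin d) | Real.exp t < ‖x‖} :=
      (isOpen_lt continuous_const continuous_norm).measurableSet
    rw [hν _ hBm]
    refine setLIntegral_congr_fun measurableSet_Ioo (fun β hβ => ?_)
    have hae : ∀ᵐ ξ ∂(lam β), ‖ξ‖ = 1 := by
      have hSm : MeasurableSet {ξ : EuclideanSpace ℝ (Fin d) | ‖ξ‖ = 1} :=
        (isClosed_eq continuous_norm continuous_const).measurableSet
      haveI := hprob β hβ
      have h1 : lam β {ξ : EuclideanSpace ℝ (Fin d) | ‖ξ‖ = 1}ᶜ = 0 := by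
        rw [measure_compl hSm (measure_ne_top _ _), hsph β hβ, measure_univ, tsub_self]
      rw [ae_iff]
      exact h1
    calc (∫⁻ ξ, (∫⁻ r in Set.Ioi (0:ℝ),
          Set.indicator {x : EuclideanSpace ℝ (Fin d) | Real.exp t < ‖x‖}
            (fun _ => (1:ℝ≥0∞)) (r • ξ) * ENNReal.ofReal (r ^ (-β - 1))) ∂(lam β))
        = ∫⁻ _, ENNReal.ofReal (Real.exp (-β * t) * β⁻¹) ∂(lam β) := by
          refine lintegral_congr_ae ?_
          filter_upwards [hae] with ξ hξ
          have hrw : ∀ r ∈ Ioi (0:ℝ),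
              Set.indicator {x : EuclideanSpace ℝ (Fin d) | Real.exp t < ‖x‖}
                (fun _ => (1:ℝ≥0∞)) (r • ξ) * ENNReal.ofReal (r ^ (-β - 1))
              = (Ioi (Real.exp t)).indicator (fun r => ENNReal.ofReal (r ^ (-β - 1))) r := by
            intro r hr
            have hmem : Real.exp t < ‖r • ξ‖ ↔ Real.exp t < r := by
              rw [norm_smul, hξ, mul_one, Real.norm_eq_abs, abs_of_pos hr]
            rw [Set.indicator_apply, Set.indicator_apply]
            simp only [Set.mem_setOf_eq, Set.mem_Ioi, hmem]
            split_ifs with h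
            · rw [one_mul]
            · rw [zero_mul]
          rw [setLIntegral_congr_fun measurableSet_Ioi hrw,
            lintegral_indicator measurableSet_Ioi _,
            Measure.restrict_restrict measurableSet_Ioi,
            Set.inter_eq_self_of_subset_left (Ioi_subset_Ioi (Real.exp_pos t).le),
            aux1 β (Real.exp t) hβ.1 (Real.exp_pos t)]
          congr 2
          rw [Real.rpow_def_of_pos (Real.exp_pos t), Real.log_exp]
          ring
      _ = ENNReal.ofReal (Real.exp (-β * t) * β⁻¹) := by
          haveI := hprob β hβ
          rw [lintegral_const, measure_univ, mul_one]
  -- main computation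
  have main : ∫⁻ x in {x : EuclideanSpace ℝ (Fin d) | 1 < ‖x‖},
      ENNReal.ofReal (Real.log ‖x‖) ∂ν
      = ∫⁻ β in Ioo (0:ℝ) 2, ENNReal.ofReal ((β ^ 2)⁻¹) ∂Γ := by
    have hlogm : AEMeasurable (fun x : EuclideanSpace ℝ (Fin d) => Real.log ‖x‖)
        (ν.restrict {x | 1 < ‖x‖}) :=
      (Real.measurable_log.comp measurable_norm).aemeasurable
    have hnn : 0 ≤ᵐ[ν.restrict {x : EuclideanSpace ℝ (Fin d) | 1 < ‖x‖}]
        fun x => Real.log ‖x‖ :=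
      (ae_restrict_iff' hA).mpr (ae_of_all _ fun x hx => Real.log_nonneg hx.le)
    rw [lintegral_eq_lintegral_meas_lt _ hnn hlogm]
    calc ∫⁻ t in Ioi (0:ℝ),
          (ν.restrict {x : EuclideanSpace ℝ (Fin d) | 1 < ‖x‖}) {x | t < Real.log ‖x‖}
        = ∫⁻ t in Ioi (0:ℝ),
            ∫⁻ β in Ioo (0:ℝ) 2, ENNReal.ofReal (Real.exp (-β * t) * β⁻¹) ∂Γ := by
          refine setLIntegral_congr_fun measurableSet_Ioi (fun t ht => ?_)
          have hm : MeasurableSet {x : EuclideanSpace ℝ (Fin d) | t < Real.log ‖x‖} :=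
            measurableSet_lt measurable_const (Real.measurable_log.comp measurable_norm)
          rw [Measure.restrict_apply hm]
          have hset : {x : EuclideanSpace ℝ (Fin d) | t < Real.log ‖x‖} ∩ {x | 1 < ‖x‖}
              = {x | Real.exp t < ‖x‖} := by
            ext x
            simp only [mem_inter_iff, mem_setOf_eq]
            constructor
            · rintro ⟨h1, h2⟩
              rwa [Real.lt_log_iff_exp_lt (by linarith)] at h1
            · intro h
              have he : (1:ℝ) < Real.exp t := by
                rw [show (1:ℝ) = Real.exp 0 from (Real.exp_zero).symm]
                exact Real.exp_lt_exp.mpr ht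
              have hx1 : 1 < ‖x‖ := lt_trans he h
              exact ⟨(Real.lt_log_iff_exp_lt (by linarith)).mpr h, hx1⟩
          rw [hset, hν' t ht]
      _ = ∫⁻ β in Ioo (0:ℝ) 2,
            (∫⁻ t in Ioi (0:ℝ), ENNReal.ofReal (Real.exp (-β * t) * β⁻¹)) ∂Γ := by
          refine lintegral_lintegral_swap ?_
          exact ((((measurable_snd.neg.mul measurable_fst).exp).mul
            measurable_snd.inv).ennreal_ofReal).aemeasurable
      _ = ∫⁻ β in Ioo (0:ℝ) 2, ENNReal.ofReal ((β ^ 2)⁻¹) ∂Γ := by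
          refine setLIntegral_congr_fun measurableSet_Ioo (fun β hβ => ?_)
          exact aux2 β hβ.1
  rw [main]
end

section
/- Let α < 0 and f_α be the inverse function of s = ∫_t^∞ u^{-α-1} e^{-u} du (with f_α(s) = 0 for s beyond the total mass). Then ∫_0^∞ f_α(s) ds = Γ(1-α) and ∫_0^∞ f_α(s)² ds = Γ(2-α), where Γ denotes the Gamma function. -/
open MeasureTheory Set

section Aux

variable {α : ℝ}

/-- the integrand -/
noncomputable def myh (α : ℝ) : ℝ → ℝ := fun u => u ^ (-α - 1) * Real.exp (-u)

/-- the function g -/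
noncomputable def myg (α : ℝ) : ℝ → ℝ := fun t => ∫ u in Ioi t, myh α u

lemma myh_cont (hα : α < 0) : ContinuousOn (myh α) (Ioi 0) := by
  intro x hx
  exact ((Real.continuousAt_rpow_const x _ (Or.inl (ne_of_gt hx))).mul
    (Real.continuous_exp.comp continuous_neg).continuousAt).continuousWithinAt

lemma myh_contAt (hα : α < 0) {x : ℝ} (hx : 0 < x) : ContinuousAt (myh α) x :=
  (Real.continuousAt_rpow_const x _ (Or.inl (ne_of_gt hx))).mul
    (Real.continuous_exp.comp continuous_neg).continuousAt

lemma myh_pos {u : ℝ} (hu : 0 < u) : 0 < myh α u :=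
  mul_pos (Real.rpow_pos_of_pos hu _) (Real.exp_pos _)

lemma myh_int (hα : α < 0) : IntegrableOn (myh α) (Ioi 0) := by
  have := Real.GammaIntegral_convergent (neg_pos.mpr hα)
  refine this.congr_fun (fun x _ => ?_) measurableSet_Ioi
  simp [myh, mul_comm, sub_eq_add_neg, add_comm]

end Aux

section Aux2

variable {α : ℝ}

lemma myg_split (hα : α < 0) {s t : ℝ} (hs : 0 ≤ s) (hst : s ≤ t) :
    myg α s = (∫ u in Ioc s t, myh α u) + myg α t := by
  have := setIntegral_union (μ := volume) (f := myh α) (Ioc_disjoint_Ioi_same) measurableSet_Ioi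
    ((myh_int hα).mono_set (fun x hx => lt_of_le_of_lt hs hx.1))
    ((myh_int hα).mono_set (fun x (hx : t < x) => lt_of_le_of_lt (hs.trans hst) hx))
  rw [Ioc_union_Ioi_eq_Ioi hst] at this
  exact this

lemma myIoc_pos (hα : α < 0) {s t : ℝ} (hs : 0 ≤ s) (hst : s < t) :
    0 < ∫ u in Ioc s t, myh α u := by
  rw [← intervalIntegral.integral_of_le hst.le]
  refine intervalIntegral.intervalIntegral_pos_of_pos_on ?_ ?_ hst
  · rw [intervalIntegrable_iff_integrableOn_Ioc_of_le hst.le]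
    exact (myh_int hα).mono_set (fun x hx => lt_of_le_of_lt hs hx.1)
  · exact fun x hx => myh_pos (lt_of_le_of_lt hs hx.1)

lemma myg_nonneg (hα : α < 0) {t : ℝ} (ht : 0 ≤ t) : 0 ≤ myg α t :=
  setIntegral_nonneg measurableSet_Ioi fun u hu => (myh_pos (lt_of_le_of_lt ht hu)).le

lemma myg_pos (hα : α < 0) {t : ℝ} (ht : 0 ≤ t) : 0 < myg α t := by
  have h1 := myg_split hα ht (le_of_lt (lt_add_one t))
  have h2 := myIoc_pos hα ht (lt_add_one t)
  have h3 := myg_nonneg hα (by linarith : (0:ℝ) ≤ t + 1)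
  linarith

lemma myg_anti (hα : α < 0) {s t : ℝ} (hs : 0 ≤ s) (hst : s < t) : myg α t < myg α s := by
  have h1 := myg_split hα hs hst.le
  have h2 := myIoc_pos hα hs hst
  linarith

lemma myg_zero (hα : α < 0) : myg α 0 = Real.Gamma (-α) := by
  rw [Real.Gamma_eq_integral (neg_pos.mpr hα), myg]
  refine setIntegral_congr_fun measurableSet_Ioi (fun x _ => ?_)
  simp [myh, mul_comm, sub_eq_add_neg, add_comm]

lemma myg_inj (hα : α < 0) : InjOn (myg α) (Ioi 0) := by
  intro a ha b hb hab
  rcases lt_trichotomy a b with h | h | h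
  · exact absurd hab (ne_of_gt (myg_anti hα (le_of_lt ha) h))
  · exact h
  · exact absurd hab (ne_of_gt (myg_anti hα (le_of_lt (mem_Ioi.mp hb)) h)).symm

lemma myg_deriv (hα : α < 0) : ∀ x ∈ Ioi (0:ℝ),
    HasDerivWithinAt (myg α) (-(myh α x)) (Ioi 0) x := by
  intro x hx
  have hprim : HasDerivAt (fun u => ∫ t in (0:ℝ)..u, myh α t) (myh α x) x := by
    refine intervalIntegral.integral_hasDerivAt_right ?_ ?_ (myh_contAt hα hx)
    · rw [intervalIntegrable_iff_integrableOn_Ioc_of_le (le_of_lt hx)]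
      exact (myh_int hα).mono_set (fun y hy => hy.1)
    · exact (myh_cont hα).stronglyMeasurableAtFilter isOpen_Ioi x hx
  have heq : (fun u => myg α 0 - ∫ t in (0:ℝ)..u, myh α t) =ᶠ[nhds x] myg α := by
    filter_upwards [isOpen_Ioi.mem_nhds hx] with u hu
    rw [intervalIntegral.integral_of_le (le_of_lt hu), myg_split hα le_rfl (le_of_lt hu)]
    ring
  have : HasDerivAt (myg α) (0 - myh α x) x :=
    ((hasDerivAt_const x (myg α 0)).sub hprim).congr_of_eventuallyEq heq.symm
  simpa using this.hasDerivWithinAt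

end Aux2

section Aux3

variable {α : ℝ}

lemma myg_small (hα : α < 0) {ε : ℝ} (hε : 0 < ε) : ∃ T : ℝ, 0 < T ∧ myg α T < ε := by
  have hU : ⋃ n : ℕ, Ioc (0:ℝ) (n:ℝ) = Ioi 0 := by
    ext x
    simp only [mem_iUnion, mem_Ioc, mem_Ioi]
    constructor
    · rintro ⟨n, h1, _⟩; exact h1
    · intro hx; exact ⟨⌈x⌉₊, hx, Nat.le_ceil x⟩
  have htend : Filter.Tendsto (fun n : ℕ => ∫ u in Ioc (0:ℝ) (n:ℝ), myh α u)
      Filter.atTop (nhds (myg α 0)) := by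
    have := tendsto_setIntegral_of_monotone (μ := volume) (f := myh α)
      (s := fun n : ℕ => Ioc (0:ℝ) (n:ℝ)) (fun n => measurableSet_Ioc)
      (fun m n hmn => Ioc_subset_Ioc le_rfl (by exact_mod_cast hmn))
      (by rw [hU]; exact myh_int hα)
    rwa [hU] at this
  have h2 : Filter.Tendsto (fun n : ℕ => myg α 0 - ∫ u in Ioc (0:ℝ) (n:ℝ), myh α u)
      Filter.atTop (nhds 0) := by
    have := Filter.Tendsto.sub (tendsto_const_nhds (x := myg α 0)) htend
    simpa using this
  have h3 : ∀ᶠ n : ℕ in Filter.atTop,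
      myg α 0 - (∫ u in Ioc (0:ℝ) (n:ℝ), myh α u) < ε :=
    Filter.Tendsto.eventually_lt_const hε h2
  obtain ⟨n, hn1, hn2⟩ := (h3.and (Filter.eventually_ge_atTop 1)).exists
  refine ⟨n, by exact_mod_cast Nat.lt_of_lt_of_le Nat.zero_lt_one hn2, ?_⟩
  have hsplit := myg_split hα le_rfl (by exact_mod_cast Nat.zero_le n : (0:ℝ) ≤ (n:ℝ))
  linarith

lemma myg_contOn (hα : α < 0) {T : ℝ} (hT : 0 ≤ T) : ContinuousOn (myg α) (Icc 0 T) := by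
  have hint : IntegrableOn (myh α) (Icc 0 T) := by
    rw [integrableOn_Icc_iff_integrableOn_Ioc]
    exact (myh_int hα).mono_set (fun x hx => hx.1)
  have hc : ContinuousOn (fun x => myg α 0 - ∫ u in Ioc 0 x, myh α u) (Icc 0 T) :=
    continuousOn_const.sub (intervalIntegral.continuousOn_primitive hint)
  refine ContinuousOn.congr hc (fun x hx => ?_)
  rw [myg_split hα le_rfl hx.1]
  ring

lemma myg_image (hα : α < 0) : myg α '' (Ioi 0) = Ioo 0 (Real.Gamma (-α)) := by
  apply Subset.antisymm
  · rintro _ ⟨t, ht, rfl⟩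
    exact ⟨myg_pos hα (le_of_lt ht), myg_zero hα ▸ myg_anti hα le_rfl ht⟩
  · rintro s ⟨hs1, hs2⟩
    obtain ⟨T, hT, hgT⟩ := myg_small hα hs1
    have hsub : s ∈ Icc (myg α T) (myg α 0) :=
      ⟨le_of_lt hgT, le_of_lt (by rwa [myg_zero hα])⟩
    obtain ⟨c, hc, hcs⟩ := intermediate_value_Icc' (le_of_lt hT) (myg_contOn hα (le_of_lt hT)) hsub
    have hc0 : c ≠ 0 := by
      rintro rfl
      rw [myg_zero hα] at hcs
      exact absurd hcs (ne_of_gt hs2)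
    exact ⟨c, lt_of_le_of_ne hc.1 (Ne.symm hc0), hcs⟩

end Aux3

lemma mykey {α : ℝ} (hα : α < 0) {f : ℝ → ℝ}
    (hf : ∀ t : ℝ, 0 < t → f (myg α t) = t)
    (hf0 : ∀ s : ℝ, Real.Gamma (-α) ≤ s → f s = 0) (p : ℕ) (hp : 0 < p) :
    (∫ s in Ioi (0:ℝ), (f s) ^ p) = Real.Gamma ((p : ℝ) - α) := by
  have hΓ : 0 < Real.Gamma (-α) := Real.Gamma_pos_of_pos (neg_pos.mpr hα)
  have step1 : (∫ s in Ioi (0:ℝ), (f s) ^ p)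
      = ∫ s in Ioi (0:ℝ), (Ioo 0 (Real.Gamma (-α))).indicator (fun s => (f s) ^ p) s := by
    refine setIntegral_congr_fun measurableSet_Ioi (fun s hs => ?_)
    by_cases h : s < Real.Gamma (-α)
    · have hmem : s ∈ Ioo 0 (Real.Gamma (-α)) := ⟨mem_Ioi.mp hs, h⟩
      rw [indicator_of_mem hmem]
    · rw [indicator_of_notMem (fun hmem => h hmem.2), hf0 s (not_lt.mp h),
        zero_pow (Nat.pos_iff_ne_zero.mp hp)]
  rw [step1, setIntegral_indicator measurableSet_Ioo,
    inter_eq_self_of_subset_right Ioo_subset_Ioi_self, ← myg_image hα,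
    integral_image_eq_integral_abs_deriv_smul measurableSet_Ioi (myg_deriv hα) (myg_inj hα)]
  have step2 : (∫ t in Ioi (0:ℝ), |(-(myh α t))| • (f (myg α t)) ^ p)
      = ∫ t in Ioi (0:ℝ), Real.exp (-t) * t ^ ((p : ℝ) - α - 1) := by
    refine setIntegral_congr_fun measurableSet_Ioi (fun t ht => ?_)
    have ht : (0:ℝ) < t := ht
    rw [abs_neg, abs_of_pos (myh_pos ht), smul_eq_mul, hf t ht,
      show ((p:ℝ) - α - 1) = (-α - 1) + (p:ℝ) by ring, Real.rpow_add ht,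
      Real.rpow_natCast]
    simp only [myh]
    ring
  rw [step2, Real.Gamma_eq_integral (by
    have h1 : (1:ℝ) ≤ (p:ℝ) := by exact_mod_cast hp
    linarith)]

/-- Let `α < 0` and let `f` be the inverse function of `s = g_α(t) = ∫_t^∞ u^{-α-1}e^{-u} du`,
extended by `0` on `[Γ(-α), ∞)`.  Then `∫_0^∞ f(s) ds = Γ(1-α)` and
`∫_0^∞ f(s)² ds = Γ(2-α)`. -/
theorem stmt4 (α : ℝ) (hα : α < 0) (f : ℝ → ℝ)
    (hf : ∀ t : ℝ, 0 < t →
      f (∫ u in Set.Ioi t, u ^ (-α - 1) * Real.exp (-u)) = t)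
    (hf0 : ∀ s : ℝ, Real.Gamma (-α) ≤ s → f s = 0) :
    (∫ s in Set.Ioi (0:ℝ), f s) = Real.Gamma (1 - α) ∧
      (∫ s in Set.Ioi (0:ℝ), (f s) ^ 2) = Real.Gamma (2 - α) := by
  have hf' : ∀ t : ℝ, 0 < t → f (myg α t) = t := hf
  constructor
  · have := mykey hα hf' hf0 1 one_pos
    simpa using this
  · have := mykey hα hf' hf0 2 two_pos
    simpa using this
end

section
/- Let α < 0 and let ν_ρ be a Lévy measure with polar decomposition ν_ρ(B) = ∫_{(0,2)} Γ_ρ(dβ) ∫_S λ_β(dξ) ∫_0^∞ 1_B(rξ) r^{-β-1} dr. Define μ's Lévy measure by ν_μ(B) = ∫_0^∞ t^{-α-1} e^{-t} dt ∫_{ℝ^d} 1_B(tx) ν_ρ(dx). Then ν_μ(B) = ∫_{(0,2)} Γ(β-α) Γ_ρ(dβ) ∫_S λ_β(dξ) ∫_0^∞ 1_B(uξ) u^{-β-1} du, where Γ is the Gamma function. -/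
open MeasureTheory Set Function ProbabilityTheory
open scoped ENNReal

lemma measurable_rpow2 : Measurable (fun p : ℝ × ℝ => p.1 ^ p.2) := by
  have h : (fun p : ℝ × ℝ => p.1 ^ p.2) = fun p : ℝ × ℝ =>
      if p.1 = 0 then (if p.2 = 0 then 1 else 0)
      else Real.exp (Real.log p.1 * p.2) * (if p.1 < 0 then Real.cos (p.2 * Real.pi) else 1) := by
    funext p
    rcases lt_trichotomy p.1 0 with hx | hx | hx
    · rw [if_neg hx.ne, if_pos hx, Real.rpow_def_of_neg hx]
    · rw [hx, if_pos rfl]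
      by_cases hy : p.2 = 0
      · simp [hy]
      · simp [hy, Real.zero_rpow hy]
    · rw [if_neg hx.ne', if_neg (not_lt.mpr hx.le), mul_one, Real.rpow_def_of_pos hx]
  rw [h]
  refine Measurable.ite (measurableSet_eq_fun measurable_fst measurable_const) ?_ ?_
  · exact Measurable.ite (measurableSet_eq_fun measurable_snd measurable_const)
      measurable_const measurable_const
  · exact ((measurable_fst.log.mul measurable_snd).exp).mul
      (Measurable.ite (measurableSet_lt measurable_fst measurable_const)
        (measurable_snd.mul measurable_const).cos measurable_const)

lemma measurable_rpow_comp {α : Type*} [MeasurableSpace α] {f g : α → ℝ}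
    (hf : Measurable f) (hg : Measurable g) : Measurable (fun x => f x ^ g x) :=
  measurable_rpow2.comp (hf.prodMk hg)

lemma subst_mul_left (t : ℝ) (ht : 0 < t) (f : ℝ → ℝ≥0∞) :
    ∫⁻ r in Set.Ioi (0:ℝ), f (t * r) = ENNReal.ofReal t⁻¹ * ∫⁻ u in Set.Ioi (0:ℝ), f u := by
  have hemb : MeasurableEmbedding (fun r : ℝ => t * r) :=
    (Homeomorph.mulLeft₀ t ht.ne').measurableEmbedding
  have hpre : (fun r : ℝ => t * r) ⁻¹' Set.Ioi 0 = Set.Ioi 0 := by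
    ext r
    simp only [Set.mem_preimage, Set.mem_Ioi]
    constructor
    · intro h; nlinarith
    · intro h; exact mul_pos ht h
  calc ∫⁻ r in Set.Ioi (0:ℝ), f (t * r)
      = ∫⁻ u, f u ∂((volume.restrict ((fun r : ℝ => t * r) ⁻¹' Set.Ioi 0)).map
          (fun r : ℝ => t * r)) := by rw [hemb.lintegral_map, hpre]
    _ = ∫⁻ u, f u ∂((volume.map (fun r : ℝ => t * r)).restrict (Set.Ioi 0)) := by
        rw [hemb.restrict_map]
    _ = ENNReal.ofReal t⁻¹ * ∫⁻ u in Set.Ioi (0:ℝ), f u := by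
        rw [Real.map_volume_mul_left ht.ne', Measure.restrict_smul, lintegral_smul_measure,
          abs_of_pos (inv_pos.mpr ht), smul_eq_mul]

/-- Let `α < 0` and let `ν` be a Lévy measure in polar form with spectral measure `Γ` on
`(0,2)` and measurable family `lam` of probability measures on the unit sphere.  Then for every
Borel set `B`,
`∫_0^∞ t^{-α-1} e^{-t} ν(t⁻¹B) dt
   = ∫_{(0,2)} Γ(β-α) Γ(dβ) ∫_S lam_β(dξ) ∫_0^∞ 1_B(uξ) u^{-β-1} du`. -/
theorem stmt5 (d : ℕ) (α : ℝ) (hα : α < 0)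
    (Γ : Measure ℝ) (lam : ℝ → Measure (EuclideanSpace ℝ (Fin d)))
    (hprob : ∀ β ∈ Set.Ioo (0:ℝ) 2, IsProbabilityMeasure (lam β))
    (hsph : ∀ β ∈ Set.Ioo (0:ℝ) 2, lam β {ξ : EuclideanSpace ℝ (Fin d) | ‖ξ‖ = 1} = 1)
    (hmeas : ∀ B : Set (EuclideanSpace ℝ (Fin d)), MeasurableSet B →
      Measurable (fun β => lam β B))
    (hΓ : ∫⁻ β in Set.Ioo (0:ℝ) 2, ENNReal.ofReal (β⁻¹ + (2 - β)⁻¹) ∂Γ < ⊤)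
    (ν : Measure (EuclideanSpace ℝ (Fin d)))
    (hν : ∀ B : Set (EuclideanSpace ℝ (Fin d)), MeasurableSet B →
      ν B = ∫⁻ β in Set.Ioo (0:ℝ) 2,
        (∫⁻ ξ, (∫⁻ r in Set.Ioi (0:ℝ),
          Set.indicator B (fun _ => (1:ℝ≥0∞)) (r • ξ) * ENNReal.ofReal (r ^ (-β - 1)))
            ∂(lam β)) ∂Γ) :
    ∀ B : Set (EuclideanSpace ℝ (Fin d)), MeasurableSet B →
      (∫⁻ t in Set.Ioi (0:ℝ), ENNReal.ofReal (t ^ (-α - 1) * Real.exp (-t)) *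
          ν ((fun x => t • x) ⁻¹' B))
        = ∫⁻ β in Set.Ioo (0:ℝ) 2, ENNReal.ofReal (Real.Gamma (β - α)) *
            (∫⁻ ξ, (∫⁻ u in Set.Ioi (0:ℝ),
              Set.indicator B (fun _ => (1:ℝ≥0∞)) (u • ξ) * ENNReal.ofReal (u ^ (-β - 1)))
                ∂(lam β)) ∂Γ := by
  intro B hB
  -- inner double integral w.r.t. `lam β`
  set J : ℝ → EuclideanSpace ℝ (Fin d) → ℝ≥0∞ := fun β ξ => ∫⁻ u in Set.Ioi (0:ℝ),
      Set.indicator B (fun _ => (1:ℝ≥0∞)) (u • ξ) * ENNReal.ofReal (u ^ (-β - 1)) with hJ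
  -- kernel version of `lam`
  have hκmeas : Measurable (fun β : ℝ => if β ∈ Set.Ioo (0:ℝ) 2 then lam β else 0) := by
    refine Measure.measurable_of_measurable_coe _ (fun s hs => ?_)
    have : (fun β : ℝ => (if β ∈ Set.Ioo (0:ℝ) 2 then lam β else 0) s)
        = (Set.Ioo (0:ℝ) 2).indicator (fun β => lam β s) := by
      funext β
      by_cases hβ : β ∈ Set.Ioo (0:ℝ) 2 <;> simp [hβ]
    rw [this]
    exact (hmeas s hs).indicator measurableSet_Ioo
  set κ : Kernel ℝ (EuclideanSpace ℝ (Fin d)) :=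
    ⟨fun β => if β ∈ Set.Ioo (0:ℝ) 2 then lam β else 0, hκmeas⟩ with hκ
  have hκ_apply : ∀ β ∈ Set.Ioo (0:ℝ) 2, κ β = lam β := by
    intro β hβ
    show (if β ∈ Set.Ioo (0:ℝ) 2 then lam β else 0) = lam β
    rw [if_pos hβ]
  haveI : IsFiniteKernel κ := by
    refine ⟨⟨1, ENNReal.one_lt_top, fun β => ?_⟩⟩
    by_cases hβ : β ∈ Set.Ioo (0:ℝ) 2
    · haveI := hprob β hβ
      rw [hκ_apply β hβ, measure_univ]
    · show (if β ∈ Set.Ioo (0:ℝ) 2 then lam β else 0) Set.univ ≤ 1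
      rw [if_neg hβ]
      simp
  -- measurability of J
  have hJm : Measurable (Function.uncurry J) := by
    apply Measurable.lintegral_prod_right'
      (f := fun p : (ℝ × EuclideanSpace ℝ (Fin d)) × ℝ =>
        Set.indicator B (fun _ => (1:ℝ≥0∞)) (p.2 • p.1.2) * ENNReal.ofReal (p.2 ^ (-p.1.1 - 1)))
    apply Measurable.mul
    · exact ((measurable_const.indicator hB).comp (measurable_snd.smul measurable_fst.snd) :
        Measurable fun p : (ℝ × EuclideanSpace ℝ (Fin d)) × ℝ =>
          Set.indicator B (fun _ => (1:ℝ≥0∞)) (p.2 • p.1.2))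
    · exact (measurable_rpow_comp measurable_snd
        ((measurable_fst.fst.neg).sub measurable_const)).ennreal_ofReal
  -- measurable version of the lam-integral
  set I : ℝ → ℝ≥0∞ := fun β => ∫⁻ ξ, J β ξ ∂(κ β) with hI
  have hIm : Measurable I := Measurable.lintegral_kernel_prod_right hJm
  -- scaling identity
  have key : ∀ t : ℝ, 0 < t → ∀ β : ℝ,
      (∫⁻ ξ, (∫⁻ r in Set.Ioi (0:ℝ),
          Set.indicator ((fun x => t • x) ⁻¹' B) (fun _ => (1:ℝ≥0∞)) (r • ξ) *
            ENNReal.ofReal (r ^ (-β - 1))) ∂(lam β))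
        = ENNReal.ofReal (t ^ β) * ∫⁻ ξ, J β ξ ∂(lam β) := by
    intro t ht β
    rw [← lintegral_const_mul' _ _ ENNReal.ofReal_ne_top]
    refine lintegral_congr fun ξ => ?_
    set f : ℝ → ℝ≥0∞ := fun u =>
      Set.indicator B (fun _ => (1:ℝ≥0∞)) (u • ξ) * ENNReal.ofReal (u ^ (-β - 1)) with hf
    have hone : ENNReal.ofReal (t ^ (β + 1)) * ENNReal.ofReal (t ^ (-β - 1)) = 1 := by
      rw [← ENNReal.ofReal_mul (Real.rpow_nonneg ht.le _), ← Real.rpow_add ht]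
      norm_num
    have h1 : (∫⁻ r in Set.Ioi (0:ℝ),
        Set.indicator ((fun x => t • x) ⁻¹' B) (fun _ => (1:ℝ≥0∞)) (r • ξ) *
          ENNReal.ofReal (r ^ (-β - 1)))
        = ∫⁻ r in Set.Ioi (0:ℝ), ENNReal.ofReal (t ^ (β + 1)) * f (t * r) := by
      refine setLIntegral_congr_fun measurableSet_Ioi
        (fun r hr => ?_)
      have hr : (0:ℝ) < r := hr
      have hind : Set.indicator ((fun x => t • x) ⁻¹' B) (fun _ => (1:ℝ≥0∞)) (r • ξ)
          = Set.indicator B (fun _ => (1:ℝ≥0∞)) ((t * r) • ξ) := by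
        by_cases h : (t * r) • ξ ∈ B
        · rw [Set.indicator_of_mem h, Set.indicator_of_mem]
          simpa [mul_smul] using h
        · rw [Set.indicator_of_notMem h, Set.indicator_of_notMem]
          simpa [mul_smul] using h
      have hmul : (t * r) ^ (-β - 1) = t ^ (-β - 1) * r ^ (-β - 1) :=
        Real.mul_rpow ht.le hr.le
      rw [hind, hf]
      simp only []
      rw [hmul, ENNReal.ofReal_mul (Real.rpow_nonneg ht.le _)]
      have : ENNReal.ofReal (t ^ (β + 1)) *
          (Set.indicator B (fun _ => (1:ℝ≥0∞)) ((t * r) • ξ) *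
            (ENNReal.ofReal (t ^ (-β - 1)) * ENNReal.ofReal (r ^ (-β - 1))))
          = (ENNReal.ofReal (t ^ (β + 1)) * ENNReal.ofReal (t ^ (-β - 1))) *
            (Set.indicator B (fun _ => (1:ℝ≥0∞)) ((t * r) • ξ) *
              ENNReal.ofReal (r ^ (-β - 1))) := by ring
      rw [this, hone, one_mul]
    rw [h1, lintegral_const_mul' _ _ ENNReal.ofReal_ne_top, subst_mul_left t ht f,
      ← mul_assoc, ← ENNReal.ofReal_mul (Real.rpow_nonneg ht.le _)]
    have : t ^ (β + 1) * t⁻¹ = t ^ β := by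
      rw [← Real.rpow_neg_one t, ← Real.rpow_add ht]
      norm_num
    rw [this]
  -- the measure ν of a scaled set
  have key2 : ∀ t : ℝ, 0 < t →
      ν ((fun x => t • x) ⁻¹' B)
        = ∫⁻ β in Set.Ioo (0:ℝ) 2, ENNReal.ofReal (t ^ β) * I β ∂Γ := by
    intro t ht
    rw [hν _ ((measurable_const_smul t) hB)]
    refine setLIntegral_congr_fun measurableSet_Ioo
      (fun β hβ => ?_)
    rw [key t ht β, hI]
    simp only []
    rw [hκ_apply β hβ]
  -- finiteness of Γ on (0,2)
  have hΓfin : Γ (Set.Ioo (0:ℝ) 2) < ⊤ := by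
    have hb : ∀ β ∈ Set.Ioo (0:ℝ) 2,
        ENNReal.ofReal (2:ℝ)⁻¹ ≤ ENNReal.ofReal (β⁻¹ + (2 - β)⁻¹) := by
      intro β hβ
      apply ENNReal.ofReal_le_ofReal
      have h1 : (2:ℝ)⁻¹ ≤ β⁻¹ := by
        apply inv_anti₀ hβ.1 hβ.2.le
      have h2 : (0:ℝ) ≤ (2 - β)⁻¹ := inv_nonneg.mpr (by linarith [hβ.2])
      linarith
    have hle : ENNReal.ofReal (2:ℝ)⁻¹ * Γ (Set.Ioo (0:ℝ) 2)
        ≤ ∫⁻ β in Set.Ioo (0:ℝ) 2, ENNReal.ofReal (β⁻¹ + (2 - β)⁻¹) ∂Γ := by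
      rw [← setLIntegral_const (Set.Ioo (0:ℝ) 2) (ENNReal.ofReal (2:ℝ)⁻¹)]
      exact setLIntegral_mono' measurableSet_Ioo hb
    by_contra h
    rw [not_lt, top_le_iff] at h
    rw [h, ENNReal.mul_top (by simp)] at hle
    exact (lt_irrefl ⊤) (lt_of_le_of_lt hle hΓ)
  haveI hfinR : IsFiniteMeasure (Γ.restrict (Set.Ioo (0:ℝ) 2)) :=
    ⟨by rwa [Measure.restrict_apply_univ]⟩
  -- the function in the double integral
  set g : ℝ → ℝ≥0∞ := fun t => ENNReal.ofReal (t ^ (-α - 1) * Real.exp (-t)) with hg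
  have hFm : Measurable (Function.uncurry fun t β => g t * (ENNReal.ofReal (t ^ β) * I β)) := by
    apply Measurable.mul
    · exact ((measurable_rpow_comp measurable_fst measurable_const).mul
        measurable_fst.neg.exp).ennreal_ofReal
    · exact ((measurable_rpow_comp measurable_fst measurable_snd).ennreal_ofReal).mul
        (hIm.comp measurable_snd)
  -- Gamma integral evaluation
  have hGamma : ∀ β ∈ Set.Ioo (0:ℝ) 2,
      (∫⁻ t in Set.Ioi (0:ℝ), g t * ENNReal.ofReal (t ^ β))
        = ENNReal.ofReal (Real.Gamma (β - α)) := by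
    intro β hβ
    have hpos : 0 < β - α := by linarith [hβ.1]
    have h1 : (∫⁻ t in Set.Ioi (0:ℝ), g t * ENNReal.ofReal (t ^ β))
        = ∫⁻ t in Set.Ioi (0:ℝ), ENNReal.ofReal (Real.exp (-t) * t ^ (β - α - 1)) := by
      refine setLIntegral_congr_fun measurableSet_Ioi
        (fun t ht => ?_)
      have ht : (0:ℝ) < t := ht
      rw [hg]
      simp only []
      rw [← ENNReal.ofReal_mul (by positivity)]
      congr 1
      rw [mul_comm (t ^ (-α - 1)) (Real.exp (-t)), mul_assoc, ← Real.rpow_add ht]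
      congr 2
      ring
    rw [h1, Real.Gamma_eq_integral hpos,
      ofReal_integral_eq_lintegral_ofReal (Real.GammaIntegral_convergent hpos)
        ((ae_restrict_iff' measurableSet_Ioi).2 (Filter.Eventually.of_forall fun x hx =>
          mul_nonneg (Real.exp_pos _).le (Real.rpow_nonneg (le_of_lt hx) _)))]
  -- main computation
  calc (∫⁻ t in Set.Ioi (0:ℝ), g t * ν ((fun x => t • x) ⁻¹' B))
      = ∫⁻ t in Set.Ioi (0:ℝ),
          ∫⁻ β in Set.Ioo (0:ℝ) 2, g t * (ENNReal.ofReal (t ^ β) * I β) ∂Γ := by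
        refine setLIntegral_congr_fun measurableSet_Ioi
          (fun t ht => ?_)
        rw [key2 t ht, ← lintegral_const_mul' _ _ ENNReal.ofReal_ne_top]
    _ = ∫⁻ β in Set.Ioo (0:ℝ) 2,
          (∫⁻ t in Set.Ioi (0:ℝ), g t * (ENNReal.ofReal (t ^ β) * I β)) ∂Γ := by
        exact lintegral_lintegral_swap (μ := volume.restrict (Set.Ioi 0))
          (ν := Γ.restrict (Set.Ioo (0:ℝ) 2)) hFm.aemeasurable
    _ = ∫⁻ β in Set.Ioo (0:ℝ) 2, ENNReal.ofReal (Real.Gamma (β - α)) * I β ∂Γ := by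
        refine setLIntegral_congr_fun measurableSet_Ioo
          (fun β hβ => ?_)
        have hrw : (fun t => g t * (ENNReal.ofReal (t ^ β) * I β))
            = fun t => (g t * ENNReal.ofReal (t ^ β)) * I β := by
          funext t; ring
        have hgm : Measurable fun t : ℝ => g t * ENNReal.ofReal (t ^ β) := by
          apply Measurable.fun_mul
          · exact ((measurable_rpow_comp measurable_id measurable_const).mul
              measurable_id.neg.exp).ennreal_ofReal
          · exact (measurable_rpow_comp measurable_id measurable_const).ennreal_ofReal
        rw [hrw, lintegral_mul_const _ hgm, hGamma β hβ, mul_comm]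
    _ = ∫⁻ β in Set.Ioo (0:ℝ) 2, ENNReal.ofReal (Real.Gamma (β - α)) *
          (∫⁻ ξ, (∫⁻ u in Set.Ioi (0:ℝ),
            Set.indicator B (fun _ => (1:ℝ≥0∞)) (u • ξ) * ENNReal.ofReal (u ^ (-β - 1)))
              ∂(lam β)) ∂Γ := by
        refine setLIntegral_congr_fun measurableSet_Ioo
          (fun β hβ => ?_)
        rw [hI]
        simp only []
        rw [hκ_apply β hβ]
end

section
/- Let α < 0 and ν_ρ as above with Γ_ρ concentrated on (0,2). Then ∫_0^∞ t^{-α} e^{-t} dt ∫_{ℝ^d} |x| · |1_{{|tx|≤1}}(x) - 1_{{|x|≤1}}(x)| ν_ρ(dx) = ∫_{|x|>1} |x| ν_ρ(dx) ∫_0^{1/|x|} t^{-α} e^{-t} dt + ∫_{|x|≤1} |x| ν_ρ(dx) ∫_{1/|x|}^∞ t^{-α} e^{-t} dt, and this quantity is finite for every Lévy measure ν_ρ. -/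
open MeasureTheory Set Real
open scoped ENNReal

namespace Stmt6Aux

variable {d : ℕ}

local notation "E" => EuclideanSpace ℝ (Fin d)

lemma meas_g (α : ℝ) : Measurable fun t : ℝ => ENNReal.ofReal (t ^ (-α) * Real.exp (-t)) :=
  ((measurable_id.pow_const (-α)).mul
    (Real.continuous_exp.comp continuous_neg).measurable).ennreal_ofReal

lemma meas_big (α : ℝ) : Measurable fun p : ℝ × E => ENNReal.ofReal (p.1 ^ (-α) * Real.exp (-p.1) *
    (‖p.2‖ * |(if ‖p.1 • p.2‖ ≤ 1 then (1:ℝ) else 0) - (if ‖p.2‖ ≤ 1 then (1:ℝ) else 0)|)) := by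
  apply Measurable.ennreal_ofReal
  apply Measurable.mul
  · exact (measurable_fst.pow_const (-α)).mul
      ((Real.continuous_exp.comp continuous_neg).measurable.comp measurable_fst)
  · apply measurable_snd.norm.mul
    apply Measurable.abs
    apply Measurable.sub
    · exact Measurable.ite
        (measurableSet_le (continuous_fst.smul continuous_snd).norm.measurable measurable_const)
        measurable_const measurable_const
    · exact Measurable.ite (measurableSet_le measurable_snd.norm measurable_const)
        measurable_const measurable_const

lemma nu_large_finite (ν : Measure E)
    (hνfin : ∫⁻ x, ENNReal.ofReal (min (‖x‖ ^ 2) 1) ∂ν < ⊤) {ε : ℝ} (hε : 0 < ε) :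
    ν {x : E | ε < ‖x‖} < ⊤ := by
  have hc : (0:ℝ) < min (ε ^ 2) 1 := lt_min (by positivity) one_pos
  have key : ENNReal.ofReal (min (ε ^ 2) 1) * ν {x : E | ε < ‖x‖}
      ≤ ∫⁻ x, ENNReal.ofReal (min (‖x‖ ^ 2) 1) ∂ν := by
    rw [← setLIntegral_const]
    refine le_trans (setLIntegral_mono
      (((measurable_norm.pow_const 2).min measurable_const).ennreal_ofReal) ?_)
      (setLIntegral_le_lintegral _ _)
    intro x hx
    refine ENNReal.ofReal_le_ofReal (min_le_min ?_ le_rfl)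
    exact pow_le_pow_left₀ hε.le hx.le 2
  by_contra h
  rw [not_lt, top_le_iff] at h
  rw [h, ENNReal.mul_top (ENNReal.ofReal_pos.mpr hc).ne'] at key
  exact (lt_irrefl ⊤ (lt_of_le_of_lt key hνfin)).elim

end Stmt6Aux

namespace Stmt6Aux
variable {d : ℕ}
local notation "E" => EuclideanSpace ℝ (Fin d)

lemma inner_gt (α : ℝ) {x : E} (hx : 1 < ‖x‖) :
    (∫⁻ t in Ioi (0:ℝ), ENNReal.ofReal (t ^ (-α) * Real.exp (-t) *
        (‖x‖ * |(if ‖t • x‖ ≤ 1 then (1:ℝ) else 0) - (if ‖x‖ ≤ 1 then (1:ℝ) else 0)|)))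
    = ENNReal.ofReal ‖x‖ *
        ∫⁻ t in Ioo (0:ℝ) ‖x‖⁻¹, ENNReal.ofReal (t ^ (-α) * Real.exp (-t)) := by
  have hx0 : (0:ℝ) < ‖x‖ := lt_trans one_pos hx
  have step : ∀ t ∈ Ioi (0:ℝ), ENNReal.ofReal (t ^ (-α) * Real.exp (-t) *
        (‖x‖ * |(if ‖t • x‖ ≤ 1 then (1:ℝ) else 0) - (if ‖x‖ ≤ 1 then (1:ℝ) else 0)|))
      = (Ioc (0:ℝ) ‖x‖⁻¹).indicator
          (fun t => ENNReal.ofReal ‖x‖ * ENNReal.ofReal (t ^ (-α) * Real.exp (-t))) t := by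
    intro t ht
    have ht0 : (0:ℝ) < t := ht
    have hnorm : ‖t • x‖ = t * ‖x‖ := by
      rw [norm_smul, Real.norm_eq_abs, abs_of_pos ht0]
    have hcond : ‖t • x‖ ≤ 1 ↔ t ≤ ‖x‖⁻¹ := by
      rw [hnorm, inv_eq_one_div, le_div_iff₀ hx0]
    rw [if_neg (not_le.mpr hx)]
    by_cases hle : t ≤ ‖x‖⁻¹
    · rw [indicator_of_mem (mem_Ioc.mpr ⟨ht0, hle⟩), if_pos (hcond.mpr hle)]
      simp only [sub_zero, abs_one, mul_one]
      rw [← ENNReal.ofReal_mul (norm_nonneg x), mul_comm]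
    · rw [indicator_of_notMem (fun hm => hle (mem_Ioc.mp hm).2), if_neg (fun hc => hle (hcond.mp hc))]
      simp
  rw [setLIntegral_congr_fun measurableSet_Ioi step,
    lintegral_indicator measurableSet_Ioc _, Measure.restrict_restrict measurableSet_Ioc,
    inter_eq_self_of_subset_left Ioc_subset_Ioi_self,
    ← setLIntegral_congr (Ioo_ae_eq_Ioc (a := (0:ℝ)) (b := ‖x‖⁻¹)),
    lintegral_const_mul _ (meas_g α)]

lemma inner_le (α : ℝ) {x : E} (hx : ‖x‖ ≤ 1) (hx0 : (0:ℝ) < ‖x‖) :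
    (∫⁻ t in Ioi (0:ℝ), ENNReal.ofReal (t ^ (-α) * Real.exp (-t) *
        (‖x‖ * |(if ‖t • x‖ ≤ 1 then (1:ℝ) else 0) - (if ‖x‖ ≤ 1 then (1:ℝ) else 0)|)))
    = ENNReal.ofReal ‖x‖ *
        ∫⁻ t in Ioi ‖x‖⁻¹, ENNReal.ofReal (t ^ (-α) * Real.exp (-t)) := by
  have hr : (0:ℝ) < ‖x‖⁻¹ := inv_pos.mpr hx0
  have step : ∀ t ∈ Ioi (0:ℝ), ENNReal.ofReal (t ^ (-α) * Real.exp (-t) *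
        (‖x‖ * |(if ‖t • x‖ ≤ 1 then (1:ℝ) else 0) - (if ‖x‖ ≤ 1 then (1:ℝ) else 0)|))
      = (Ioi ‖x‖⁻¹).indicator
          (fun t => ENNReal.ofReal ‖x‖ * ENNReal.ofReal (t ^ (-α) * Real.exp (-t))) t := by
    intro t ht
    have ht0 : (0:ℝ) < t := ht
    have hnorm : ‖t • x‖ = t * ‖x‖ := by
      rw [norm_smul, Real.norm_eq_abs, abs_of_pos ht0]
    have hcond : ‖t • x‖ ≤ 1 ↔ t ≤ ‖x‖⁻¹ := by
      rw [hnorm, inv_eq_one_div, le_div_iff₀ hx0]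
    rw [if_pos hx]
    by_cases hle : t ≤ ‖x‖⁻¹
    · rw [indicator_of_notMem (fun hm => (not_lt.mpr hle) (mem_Ioi.mp hm)), if_pos (hcond.mpr hle)]
      simp
    · rw [indicator_of_mem (mem_Ioi.mpr (not_le.mp hle)), if_neg (fun hc => hle (hcond.mp hc))]
      simp only [zero_sub, abs_neg, abs_one, mul_one]
      rw [← ENNReal.ofReal_mul (norm_nonneg x), mul_comm]
  rw [setLIntegral_congr_fun measurableSet_Ioi step,
    lintegral_indicator measurableSet_Ioi _, Measure.restrict_restrict measurableSet_Ioi,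
    inter_eq_self_of_subset_left (Ioi_subset_Ioi hr.le),
    lintegral_const_mul _ (meas_g α)]

lemma inner_zero (α : ℝ) {x : E} (hx0 : x = 0) :
    (∫⁻ t in Ioi (0:ℝ), ENNReal.ofReal (t ^ (-α) * Real.exp (-t) *
        (‖x‖ * |(if ‖t • x‖ ≤ 1 then (1:ℝ) else 0) - (if ‖x‖ ≤ 1 then (1:ℝ) else 0)|)))
    = ENNReal.ofReal ‖x‖ *
        ∫⁻ t in Ioi ‖x‖⁻¹, ENNReal.ofReal (t ^ (-α) * Real.exp (-t)) := by
  subst hx0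
  simp

end Stmt6Aux

namespace Stmt6Aux
variable {d : ℕ}
local notation "E" => EuclideanSpace ℝ (Fin d)

lemma sigmaFinite_levy (ν : Measure E) (hν0 : ν {0} = 0)
    (hνfin : ∫⁻ x, ENNReal.ofReal (min (‖x‖ ^ 2) 1) ∂ν < ⊤) : SigmaFinite ν := by
  refine ⟨⟨⟨fun n => {x : E | ((n:ℝ)+1)⁻¹ < ‖x‖} ∪ {0}, fun _ => mem_univ _, ?_, ?_⟩⟩⟩
  · intro n
    refine lt_of_le_of_lt (measure_union_le _ _) ?_
    have h1 : ν {x : E | ((n:ℝ)+1)⁻¹ < ‖x‖} < ⊤ := nu_large_finite ν hνfin (by positivity)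
    rw [hν0]
    simpa using h1
  · refine eq_univ_of_forall fun x => ?_
    by_cases hx : x = 0
    · exact mem_iUnion.mpr ⟨0, Or.inr hx⟩
    · have hpos : 0 < ‖x‖ := norm_pos_iff.mpr hx
      obtain ⟨n, hn⟩ := exists_nat_gt ‖x‖⁻¹
      refine mem_iUnion.mpr ⟨n, Or.inl ?_⟩
      have h2 : ‖x‖⁻¹ < (n:ℝ) + 1 := hn.trans (lt_add_one _)
      have := inv_strictAnti₀ (inv_pos.mpr hpos) h2
      rwa [inv_inv] at this

end Stmt6Aux

namespace Stmt6Aux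
variable {d : ℕ}
local notation "E" => EuclideanSpace ℝ (Fin d)

lemma term1_bound {α : ℝ} (hα : α < 0) {x : E} (hx : 1 < ‖x‖) :
    ENNReal.ofReal ‖x‖ * (∫⁻ t in Ioo (0:ℝ) ‖x‖⁻¹, ENNReal.ofReal (t ^ (-α) * Real.exp (-t)))
      ≤ ENNReal.ofReal (1 / (-α + 1)) := by
  have hx0 : (0:ℝ) < ‖x‖ := lt_trans one_pos hx
  have hr : (0:ℝ) < ‖x‖⁻¹ := inv_pos.mpr hx0
  have hα1 : (0:ℝ) < -α + 1 := by linarith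
  have hmono : (∫⁻ t in Ioo (0:ℝ) ‖x‖⁻¹, ENNReal.ofReal (t ^ (-α) * Real.exp (-t)))
      ≤ ∫⁻ t in Ioo (0:ℝ) ‖x‖⁻¹, ENNReal.ofReal (t ^ (-α)) := by
    refine setLIntegral_mono' measurableSet_Ioo fun t ht => ENNReal.ofReal_le_ofReal ?_
    have h1 : Real.exp (-t) ≤ 1 := Real.exp_le_one_iff.mpr (by linarith [ht.1])
    exact mul_le_of_le_one_right (Real.rpow_nonneg ht.1.le _) h1
  have hval : (∫⁻ t in Ioo (0:ℝ) ‖x‖⁻¹, ENNReal.ofReal (t ^ (-α)))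
      = ENNReal.ofReal ((‖x‖⁻¹) ^ (-α + 1) / (-α + 1)) := by
    rw [setLIntegral_congr (Ioo_ae_eq_Ioc (a := (0:ℝ)) (b := ‖x‖⁻¹))]
    have hint : IntegrableOn (fun t : ℝ => t ^ (-α)) (Ioc (0:ℝ) ‖x‖⁻¹) := by
      rw [← intervalIntegrable_iff_integrableOn_Ioc_of_le hr.le]
      exact intervalIntegral.intervalIntegrable_rpow' (by linarith)
    rw [← ofReal_integral_eq_lintegral_ofReal hint ((ae_restrict_iff' measurableSet_Ioc).mpr
      (ae_of_all _ fun t ht => Real.rpow_nonneg ht.1.le _))]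
    congr 1
    rw [← intervalIntegral.integral_of_le hr.le, integral_rpow (Or.inl (by linarith)),
      Real.zero_rpow (ne_of_gt hα1), sub_zero]
  have key : ‖x‖ * ((‖x‖⁻¹) ^ (-α + 1)) = ‖x‖ ^ α := by
    rw [Real.inv_rpow (norm_nonneg x), ← Real.rpow_neg (norm_nonneg x)]
    nth_rewrite 1 [← Real.rpow_one ‖x‖]
    rw [← Real.rpow_add hx0]
    norm_num
  calc ENNReal.ofReal ‖x‖ * (∫⁻ t in Ioo (0:ℝ) ‖x‖⁻¹, ENNReal.ofReal (t ^ (-α) * Real.exp (-t)))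
      ≤ ENNReal.ofReal ‖x‖ * ENNReal.ofReal ((‖x‖⁻¹) ^ (-α + 1) / (-α + 1)) :=
        mul_le_mul_right (le_of_le_of_eq hmono hval) _
    _ = ENNReal.ofReal (‖x‖ * ((‖x‖⁻¹) ^ (-α + 1) / (-α + 1))) :=
        (ENNReal.ofReal_mul (norm_nonneg x)).symm
    _ ≤ ENNReal.ofReal (1 / (-α + 1)) := by
        refine ENNReal.ofReal_le_ofReal ?_
        rw [← mul_div_assoc, key]
        have h1 : ‖x‖ ^ α ≤ 1 := Real.rpow_le_one_of_one_le_of_nonpos hx.le hα.le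
        gcongr

lemma term2_bound {α : ℝ} (hα : α < 0) {x : E} (hx : ‖x‖ ≤ 1) :
    ENNReal.ofReal ‖x‖ * (∫⁻ t in Ioi ‖x‖⁻¹, ENNReal.ofReal (t ^ (-α) * Real.exp (-t)))
      ≤ ((∫⁻ t in Ioi (0:ℝ), ENNReal.ofReal (t ^ (-α) * Real.exp (-2⁻¹ * t))) *
          ENNReal.ofReal 2) * ENNReal.ofReal (‖x‖ ^ 2) := by
  set M := ∫⁻ t in Ioi (0:ℝ), ENNReal.ofReal (t ^ (-α) * Real.exp (-2⁻¹ * t)) with hM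
  by_cases hx0 : x = 0
  · subst hx0; simp
  have hpos : (0:ℝ) < ‖x‖ := norm_pos_iff.mpr hx0
  have hrpos : (0:ℝ) < ‖x‖⁻¹ := inv_pos.mpr hpos
  have hmeas2 : Measurable fun t : ℝ => ENNReal.ofReal (t ^ (-α) * Real.exp (-2⁻¹ * t)) :=
    ((measurable_id.pow_const (-α)).mul
      (Real.measurable_exp.comp (measurable_id.const_mul (-2⁻¹)))).ennreal_ofReal
  have hinner : (∫⁻ t in Ioi ‖x‖⁻¹, ENNReal.ofReal (t ^ (-α) * Real.exp (-t)))
      ≤ ENNReal.ofReal (Real.exp (-2⁻¹ * ‖x‖⁻¹)) * M := by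
    have step : ∀ t ∈ Ioi ‖x‖⁻¹, ENNReal.ofReal (t ^ (-α) * Real.exp (-t))
        ≤ ENNReal.ofReal (Real.exp (-2⁻¹ * ‖x‖⁻¹)) *
          ENNReal.ofReal (t ^ (-α) * Real.exp (-2⁻¹ * t)) := by
      intro t ht
      have htr : ‖x‖⁻¹ < t := ht
      have ht0 : (0:ℝ) < t := lt_trans hrpos htr
      rw [← ENNReal.ofReal_mul (Real.exp_nonneg _)]
      refine ENNReal.ofReal_le_ofReal ?_
      have hexp : Real.exp (-2⁻¹ * t) ≤ Real.exp (-2⁻¹ * ‖x‖⁻¹) :=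
        Real.exp_le_exp.mpr (by linarith)
      have hsplit : Real.exp (-t) = Real.exp (-2⁻¹ * t) * Real.exp (-2⁻¹ * t) := by
        rw [← Real.exp_add]; ring_nf
      have h0 : (0:ℝ) ≤ t ^ (-α) * Real.exp (-2⁻¹ * t) :=
        mul_nonneg (Real.rpow_nonneg ht0.le _) (Real.exp_nonneg _)
      calc t ^ (-α) * Real.exp (-t)
          = Real.exp (-2⁻¹ * t) * (t ^ (-α) * Real.exp (-2⁻¹ * t)) := by rw [hsplit]; ring
        _ ≤ Real.exp (-2⁻¹ * ‖x‖⁻¹) * (t ^ (-α) * Real.exp (-2⁻¹ * t)) :=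
            mul_le_mul_of_nonneg_right hexp h0
    calc (∫⁻ t in Ioi ‖x‖⁻¹, ENNReal.ofReal (t ^ (-α) * Real.exp (-t)))
        ≤ ∫⁻ t in Ioi ‖x‖⁻¹, ENNReal.ofReal (Real.exp (-2⁻¹ * ‖x‖⁻¹)) *
            ENNReal.ofReal (t ^ (-α) * Real.exp (-2⁻¹ * t)) :=
          setLIntegral_mono' measurableSet_Ioi step
      _ = ENNReal.ofReal (Real.exp (-2⁻¹ * ‖x‖⁻¹)) *
            ∫⁻ t in Ioi ‖x‖⁻¹, ENNReal.ofReal (t ^ (-α) * Real.exp (-2⁻¹ * t)) :=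
          lintegral_const_mul _ hmeas2
      _ ≤ ENNReal.ofReal (Real.exp (-2⁻¹ * ‖x‖⁻¹)) * M :=
          mul_le_mul_right (lintegral_mono_set (Ioi_subset_Ioi hrpos.le)) _
  have hexp2 : Real.exp (-2⁻¹ * ‖x‖⁻¹) ≤ 2 * ‖x‖ := by
    have hu : (0:ℝ) < 2⁻¹ * ‖x‖⁻¹ := by positivity
    have h1 : 2⁻¹ * ‖x‖⁻¹ < Real.exp (2⁻¹ * ‖x‖⁻¹) := by
      linarith [Real.add_one_le_exp (2⁻¹ * ‖x‖⁻¹)]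
    have h2 : (Real.exp (2⁻¹ * ‖x‖⁻¹))⁻¹ ≤ (2⁻¹ * ‖x‖⁻¹)⁻¹ := inv_anti₀ hu h1.le
    calc Real.exp (-2⁻¹ * ‖x‖⁻¹) = (Real.exp (2⁻¹ * ‖x‖⁻¹))⁻¹ := by
          rw [← Real.exp_neg]; ring_nf
      _ ≤ (2⁻¹ * ‖x‖⁻¹)⁻¹ := h2
      _ = 2 * ‖x‖ := by rw [mul_inv, inv_inv, inv_inv]
  calc ENNReal.ofReal ‖x‖ * (∫⁻ t in Ioi ‖x‖⁻¹, ENNReal.ofReal (t ^ (-α) * Real.exp (-t)))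
      ≤ ENNReal.ofReal ‖x‖ * (ENNReal.ofReal (Real.exp (-2⁻¹ * ‖x‖⁻¹)) * M) :=
        mul_le_mul_right hinner _
    _ ≤ ENNReal.ofReal ‖x‖ * (ENNReal.ofReal (2 * ‖x‖) * M) :=
        mul_le_mul_right (mul_le_mul_left (ENNReal.ofReal_le_ofReal hexp2) M) _
    _ = (M * ENNReal.ofReal 2) * ENNReal.ofReal (‖x‖ ^ 2) := by
        rw [← mul_assoc, ← ENNReal.ofReal_mul (norm_nonneg x),
          show ‖x‖ * (2 * ‖x‖) = 2 * ‖x‖ ^ 2 by ring,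
          ENNReal.ofReal_mul (by norm_num : (0:ℝ) ≤ 2)]
        ring

end Stmt6Aux

/-- Let `α < 0` and let `ν` be a Lévy measure on `ℝ^d`.  Then
`∫_0^∞ t^{-α} e^{-t} dt ∫ |x| |1_{|tx|≤1} - 1_{|x|≤1}| ν(dx)
  = ∫_{|x|>1} |x| ν(dx) ∫_0^{1/|x|} t^{-α}e^{-t} dt
    + ∫_{|x|≤1} |x| ν(dx) ∫_{1/|x|}^∞ t^{-α}e^{-t} dt`,
and this quantity is finite. -/
theorem stmt6 (d : ℕ) (α : ℝ) (hα : α < 0)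
    (ν : Measure (EuclideanSpace ℝ (Fin d)))
    (hν0 : ν {0} = 0)
    (hνfin : ∫⁻ x, ENNReal.ofReal (min (‖x‖ ^ 2) 1) ∂ν < ⊤) :
    (∫⁻ t in Set.Ioi (0:ℝ), ∫⁻ x, ENNReal.ofReal (t ^ (-α) * Real.exp (-t) *
        (‖x‖ * |(if ‖t • x‖ ≤ 1 then (1:ℝ) else 0) - (if ‖x‖ ≤ 1 then (1:ℝ) else 0)|)) ∂ν)
      = (∫⁻ x in {x : EuclideanSpace ℝ (Fin d) | 1 < ‖x‖},
            ENNReal.ofReal ‖x‖ *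
              (∫⁻ t in Set.Ioo (0:ℝ) ‖x‖⁻¹, ENNReal.ofReal (t ^ (-α) * Real.exp (-t))) ∂ν)
        + (∫⁻ x in {x : EuclideanSpace ℝ (Fin d) | ‖x‖ ≤ 1},
            ENNReal.ofReal ‖x‖ *
              (∫⁻ t in Set.Ioi ‖x‖⁻¹, ENNReal.ofReal (t ^ (-α) * Real.exp (-t))) ∂ν) ∧
    (∫⁻ t in Set.Ioi (0:ℝ), ∫⁻ x, ENNReal.ofReal (t ^ (-α) * Real.exp (-t) *
        (‖x‖ * |(if ‖t • x‖ ≤ 1 then (1:ℝ) else 0) - (if ‖x‖ ≤ 1 then (1:ℝ) else 0)|)) ∂ν) < ⊤ := by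
  have hσ : SigmaFinite ν := Stmt6Aux.sigmaFinite_levy ν hν0 hνfin
  have hS : MeasurableSet {x : EuclideanSpace ℝ (Fin d) | 1 < ‖x‖} :=
    measurableSet_lt measurable_const measurable_norm
  have hB : MeasurableSet {x : EuclideanSpace ℝ (Fin d) | ‖x‖ ≤ 1} :=
    measurableSet_le measurable_norm measurable_const
  have hcompl : {x : EuclideanSpace ℝ (Fin d) | 1 < ‖x‖}ᶜ
      = {x : EuclideanSpace ℝ (Fin d) | ‖x‖ ≤ 1} := by
    ext x; simp [not_lt]
  have hEQ : (∫⁻ t in Set.Ioi (0:ℝ), ∫⁻ x, ENNReal.ofReal (t ^ (-α) * Real.exp (-t) *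
        (‖x‖ * |(if ‖t • x‖ ≤ 1 then (1:ℝ) else 0) - (if ‖x‖ ≤ 1 then (1:ℝ) else 0)|)) ∂ν)
      = (∫⁻ x in {x : EuclideanSpace ℝ (Fin d) | 1 < ‖x‖},
            ENNReal.ofReal ‖x‖ *
              (∫⁻ t in Set.Ioo (0:ℝ) ‖x‖⁻¹, ENNReal.ofReal (t ^ (-α) * Real.exp (-t))) ∂ν)
        + (∫⁻ x in {x : EuclideanSpace ℝ (Fin d) | ‖x‖ ≤ 1},
            ENNReal.ofReal ‖x‖ *
              (∫⁻ t in Set.Ioi ‖x‖⁻¹, ENNReal.ofReal (t ^ (-α) * Real.exp (-t))) ∂ν) := by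
    rw [lintegral_lintegral_swap (Stmt6Aux.meas_big α).aemeasurable,
      ← lintegral_add_compl _ hS, hcompl]
    congr 1
    · exact setLIntegral_congr_fun hS (fun x hx => Stmt6Aux.inner_gt α hx)
    · refine setLIntegral_congr_fun hB (fun x hx => ?_)
      by_cases hx0 : x = 0
      · exact Stmt6Aux.inner_zero α hx0
      · exact Stmt6Aux.inner_le α hx (norm_pos_iff.mpr hx0)
  refine ⟨hEQ, ?_⟩
  rw [hEQ]
  have h1 : (∫⁻ x in {x : EuclideanSpace ℝ (Fin d) | 1 < ‖x‖},
      ENNReal.ofReal ‖x‖ *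
        (∫⁻ t in Set.Ioo (0:ℝ) ‖x‖⁻¹, ENNReal.ofReal (t ^ (-α) * Real.exp (-t))) ∂ν) < ⊤ := by
    have hν1 : ν {x : EuclideanSpace ℝ (Fin d) | 1 < ‖x‖} < ⊤ :=
      Stmt6Aux.nu_large_finite ν hνfin one_pos
    calc (∫⁻ x in {x : EuclideanSpace ℝ (Fin d) | 1 < ‖x‖},
        ENNReal.ofReal ‖x‖ *
          (∫⁻ t in Set.Ioo (0:ℝ) ‖x‖⁻¹, ENNReal.ofReal (t ^ (-α) * Real.exp (-t))) ∂ν)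
        ≤ ∫⁻ _ in {x : EuclideanSpace ℝ (Fin d) | 1 < ‖x‖},
            ENNReal.ofReal (1 / (-α + 1)) ∂ν :=
          setLIntegral_mono' hS fun x hx => Stmt6Aux.term1_bound hα hx
      _ = ENNReal.ofReal (1 / (-α + 1)) * ν {x : EuclideanSpace ℝ (Fin d) | 1 < ‖x‖} :=
          setLIntegral_const _ _
      _ < ⊤ := ENNReal.mul_lt_top ENNReal.ofReal_lt_top hν1
  have hMfin : (∫⁻ t in Set.Ioi (0:ℝ), ENNReal.ofReal (t ^ (-α) * Real.exp (-2⁻¹ * t))) < ⊤ := by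
    have hint : IntegrableOn (fun t : ℝ => t ^ (-α) * Real.exp (-2⁻¹ * t)) (Set.Ioi (0:ℝ)) := by
      have h := integrableOn_rpow_mul_exp_neg_mul_rpow (p := 1) (s := -α) (b := 2⁻¹)
        (by linarith) one_pos (by norm_num)
      simpa [Real.rpow_one] using h
    exact (hasFiniteIntegral_iff_ofReal ((ae_restrict_iff' measurableSet_Ioi).mpr
      (ae_of_all _ fun t ht => mul_nonneg (Real.rpow_nonneg (le_of_lt ht) _)
        (Real.exp_nonneg _)))).mp hint.hasFiniteIntegral
  have h2 : (∫⁻ x in {x : EuclideanSpace ℝ (Fin d) | ‖x‖ ≤ 1},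
      ENNReal.ofReal ‖x‖ *
        (∫⁻ t in Set.Ioi ‖x‖⁻¹, ENNReal.ofReal (t ^ (-α) * Real.exp (-t))) ∂ν) < ⊤ := by
    calc (∫⁻ x in {x : EuclideanSpace ℝ (Fin d) | ‖x‖ ≤ 1},
        ENNReal.ofReal ‖x‖ *
          (∫⁻ t in Set.Ioi ‖x‖⁻¹, ENNReal.ofReal (t ^ (-α) * Real.exp (-t))) ∂ν)
        ≤ ∫⁻ x in {x : EuclideanSpace ℝ (Fin d) | ‖x‖ ≤ 1},
            ((∫⁻ t in Set.Ioi (0:ℝ), ENNReal.ofReal (t ^ (-α) * Real.exp (-2⁻¹ * t))) *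
              ENNReal.ofReal 2) * ENNReal.ofReal (‖x‖ ^ 2) ∂ν :=
          setLIntegral_mono' hB fun x hx => Stmt6Aux.term2_bound hα hx
      _ = ((∫⁻ t in Set.Ioi (0:ℝ), ENNReal.ofReal (t ^ (-α) * Real.exp (-2⁻¹ * t))) *
              ENNReal.ofReal 2) *
            ∫⁻ x in {x : EuclideanSpace ℝ (Fin d) | ‖x‖ ≤ 1},
              ENNReal.ofReal (‖x‖ ^ 2) ∂ν :=
          lintegral_const_mul _ ((measurable_norm.pow_const 2).ennreal_ofReal)
      _ ≤ ((∫⁻ t in Set.Ioi (0:ℝ), ENNReal.ofReal (t ^ (-α) * Real.exp (-2⁻¹ * t))) *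
              ENNReal.ofReal 2) * ∫⁻ x, ENNReal.ofReal (min (‖x‖ ^ 2) 1) ∂ν := by
          refine mul_le_mul_right ?_ _
          refine le_trans (le_of_eq (setLIntegral_congr_fun hB
            (fun x hx => ?_))) (setLIntegral_le_lintegral _ _)
          rw [min_eq_left (pow_le_one₀ (norm_nonneg x) hx)]
      _ < ⊤ := ENNReal.mul_lt_top (ENNReal.mul_lt_top hMfin ENNReal.ofReal_lt_top) hνfin
  exact ENNReal.add_lt_top.mpr ⟨h1, h2⟩
end

section
/- Let b > 1, 0 < α ≤ 2, and let 𝔖_α(b) = {ρ ∈ ID(ℝ^d) : P_{b^α}ρ = T_bρ * δ_γ for some γ ∈ ℝ^d} (semi-stable distributions with span b, including point masses). Define Φρ = T_bρ * ρ. Then Φ maps 𝔖_α(b) onto 𝔖_α(b): if ρ ∈ 𝔖_α(b) then Φρ ∈ 𝔖_α(b), and every μ ∈ 𝔖_α(b) equals Φρ for ρ = P_{1/(b^α+1)}(μ * δ_{(1/(b+1))γ'}), where P_{b^α}μ = T_bμ * δ_{γ'}. -/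
/-- An abstract calculus of infinitely divisible distributions on a real vector space `E`:
`conv` is convolution, `P t` is raising to the `t`-th convolution power (`t > 0`),
`T a` is dilation by `a ≠ 0`, and `delta γ` is the point mass at `γ`, together with the
standard algebraic identities these operations satisfy on `ID(ℝ^d)`. -/
structure IDAlg (E : Type*) [AddCommGroup E] [Module ℝ E] where
  X : Type*
  conv : X → X → X
  P : ℝ → X → X
  T : ℝ → X → X
  delta : E → X
  conv_comm : ∀ μ ν, conv μ ν = conv ν μ
  conv_assoc : ∀ μ ν κ, conv (conv μ ν) κ = conv μ (conv ν κ)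
  conv_delta_zero : ∀ μ, conv μ (delta 0) = μ
  P_one : ∀ μ, P 1 μ = μ
  P_mul : ∀ s t : ℝ, 0 < s → 0 < t → ∀ μ, P s (P t μ) = P (s * t) μ
  P_conv : ∀ t : ℝ, 0 < t → ∀ μ ν, P t (conv μ ν) = conv (P t μ) (P t ν)
  P_add : ∀ s t : ℝ, 0 < s → 0 < t → ∀ μ, conv (P s μ) (P t μ) = P (s + t) μ
  P_delta : ∀ t : ℝ, 0 < t → ∀ γ, P t (delta γ) = delta (t • γ)
  T_one : ∀ μ, T 1 μ = μ
  T_mul : ∀ a b : ℝ, a ≠ 0 → b ≠ 0 → ∀ μ, T a (T b μ) = T (a * b) μ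
  T_conv : ∀ a : ℝ, a ≠ 0 → ∀ μ ν, T a (conv μ ν) = conv (T a μ) (T a ν)
  T_P : ∀ a t : ℝ, a ≠ 0 → 0 < t → ∀ μ, T a (P t μ) = P t (T a μ)
  T_delta : ∀ a : ℝ, a ≠ 0 → ∀ γ, T a (delta γ) = delta (a • γ)
  delta_conv : ∀ γ γ', conv (delta γ) (delta γ') = delta (γ + γ')


/-- Example 4.5 of the paper.  Let `b > 1`, `0 < α ≤ 2`, and
`𝔖_α(b) = {ρ : P_{b^α}ρ = T_bρ * δ_γ for some γ}`.  With `Φρ = T_bρ * ρ`, `Φ` maps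
`𝔖_α(b)` onto `𝔖_α(b)`: `Φρ ∈ 𝔖_α(b)` for `ρ ∈ 𝔖_α(b)`, and every `μ ∈ 𝔖_α(b)` with
`P_{b^α}μ = T_bμ * δ_{γ'}` satisfies `μ = Φρ` for `ρ = P_{1/(b^α+1)}(μ * δ_{γ'/(b+1)})`. -/
theorem stmt14 (E : Type*) [AddCommGroup E] [Module ℝ E] (Alg : IDAlg E)
    (b α : ℝ) (hb : 1 < b) (hα : 0 < α) (hα2 : α ≤ 2) :
    (∀ ρ, (∃ γ, Alg.P (b ^ α) ρ = Alg.conv (Alg.T b ρ) (Alg.delta γ)) →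
      ∃ γ, Alg.P (b ^ α) (Alg.conv (Alg.T b ρ) ρ)
        = Alg.conv (Alg.T b (Alg.conv (Alg.T b ρ) ρ)) (Alg.delta γ)) ∧
    (∀ μ γ', Alg.P (b ^ α) μ = Alg.conv (Alg.T b μ) (Alg.delta γ') →
      Alg.conv
          (Alg.T b (Alg.P (1 / (b ^ α + 1)) (Alg.conv μ (Alg.delta ((1 / (b + 1)) • γ')))))
          (Alg.P (1 / (b ^ α + 1)) (Alg.conv μ (Alg.delta ((1 / (b + 1)) • γ')))) = μ) := by
  have hb0 : (0:ℝ) < b := lt_trans one_pos hb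
  have hbne : b ≠ 0 := ne_of_gt hb0
  have hpow : 0 < b ^ α := Real.rpow_pos_of_pos hb0 α
  have hp1 : 0 < b ^ α + 1 := by linarith
  have hs : 0 < 1 / (b ^ α + 1) := by positivity
  have swap : ∀ a x c y, Alg.conv (Alg.conv a x) (Alg.conv c y)
      = Alg.conv (Alg.conv a c) (Alg.conv x y) := by
    intro a x c y
    rw [Alg.conv_assoc, ← Alg.conv_assoc x c y, Alg.conv_comm x c,
      Alg.conv_assoc c x y, ← Alg.conv_assoc]
  refine ⟨?_, ?_⟩
  · rintro ρ ⟨γ, hγ⟩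
    refine ⟨b • γ + γ, ?_⟩
    rw [Alg.P_conv _ hpow, ← Alg.T_P _ _ hbne hpow, hγ, Alg.T_conv _ hbne,
      Alg.T_delta _ hbne, Alg.T_conv _ hbne, swap, Alg.delta_conv]
  · intro μ γ' hγ'
    set ν := Alg.conv μ (Alg.delta ((1 / (b + 1)) • γ')) with hν
    have key : Alg.conv (Alg.T b ν) ν = Alg.P (b ^ α + 1) μ := by
      have hsum : b • ((1 / (b + 1)) • γ') + (1 / (b + 1)) • γ' = γ' := by
        rw [smul_smul, ← add_smul]
        have : b * (1 / (b + 1)) + 1 / (b + 1) = 1 := by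
          field_simp
        rw [this, one_smul]
      rw [hν, Alg.T_conv _ hbne, Alg.T_delta _ hbne, swap, Alg.delta_conv, hsum,
        Alg.conv_assoc, Alg.conv_comm μ (Alg.delta γ'),
        ← Alg.conv_assoc, ← hγ']
      nth_rewrite 2 [← Alg.P_one μ]
      exact Alg.P_add _ _ hpow one_pos μ
    rw [Alg.T_P _ _ hbne hs, ← Alg.P_conv _ hs, key, Alg.P_mul _ _ hs hp1,
      one_div_mul_cancel (ne_of_gt hp1), Alg.P_one]
end

section
/- Let Φ_h : ID → ID be a map that is injective and commutes with T_{-1} (Φ_h T_{-1} = T_{-1} Φ_h), and define Φ_f ρ = Φ_h(ρ * T_{-1}ρ). Then for every n ≥ 1, the range of Φ_f^n equals the intersection of the range of Φ_h^n (composed with P_{2^n}) with the symmetric distributions: Range(Φ_f^n) = Range(Φ_h^n) ∩ ID_sym, assuming additionally Φ_h commutes with every P_t and Range(Φ_h^n) is closed under P_t for all t > 0. -/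
/-- Example 4.3/4.4 pattern of the paper.  Suppose `Φ_h : ID → ID` is injective, commutes
with `T_{-1}` and with every `P_t` (`t > 0`), and set `Φ_f ρ = Φ_h(ρ * T_{-1}ρ)`.  If the
range of `Φ_h^n` is closed under every `P_t`, then for every `n ≥ 1`,
`Range(Φ_f^n) = Range(Φ_h^n) ∩ ID_sym`. -/
theorem stmt16 (E : Type*) [AddCommGroup E] [Module ℝ E] (Alg : IDAlg E)
    (Φh : Alg.X → Alg.X) (hinj : Function.Injective Φh)
    (hT : ∀ ρ, Φh (Alg.T (-1) ρ) = Alg.T (-1) (Φh ρ))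
    (hP : ∀ t : ℝ, 0 < t → ∀ ρ, Φh (Alg.P t ρ) = Alg.P t (Φh ρ))
    (n : ℕ) (hn : 1 ≤ n)
    (hclosed : ∀ t : ℝ, 0 < t → ∀ μ ∈ Set.range (Φh^[n]), Alg.P t μ ∈ Set.range (Φh^[n])) :
    Set.range ((fun ρ => Φh (Alg.conv ρ (Alg.T (-1) ρ)))^[n])
      = Set.range (Φh^[n]) ∩ {μ | Alg.T (-1) μ = μ} := by
  set Φf := fun ρ => Φh (Alg.conv ρ (Alg.T (-1) ρ)) with hΦf
  have Tinv : ∀ μ, Alg.T (-1) (Alg.T (-1) μ) = μ := by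
    intro μ
    rw [Alg.T_mul (-1) (-1) (by norm_num) (by norm_num)]
    norm_num [Alg.T_one]
  -- U ρ := ρ * T₋₁ρ is symmetric
  have Usym : ∀ ρ, Alg.T (-1) (Alg.conv ρ (Alg.T (-1) ρ)) = Alg.conv ρ (Alg.T (-1) ρ) := by
    intro ρ
    rw [Alg.T_conv (-1) (by norm_num), Tinv, Alg.conv_comm]
  -- iterates of Φh commute with T₋₁ and P t
  have hTiter : ∀ k ρ, Φh^[k] (Alg.T (-1) ρ) = Alg.T (-1) (Φh^[k] ρ) := by
    intro k
    induction k with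
    | zero => intro ρ; simp
    | succ k ih =>
        intro ρ
        rw [Function.iterate_succ_apply', Function.iterate_succ_apply', ih, hT]
  have hPiter : ∀ k, ∀ t : ℝ, 0 < t → ∀ ρ, Φh^[k] (Alg.P t ρ) = Alg.P t (Φh^[k] ρ) := by
    intro k
    induction k with
    | zero => intro t ht ρ; simp
    | succ k ih =>
        intro t ht ρ
        rw [Function.iterate_succ_apply', Function.iterate_succ_apply', ih t ht, hP t ht]
  -- symmetric μ: μ * T₋₁μ = P 2 μ
  have sym_conv : ∀ μ, Alg.T (-1) μ = μ → Alg.conv μ (Alg.T (-1) μ) = Alg.P 2 μ := by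
    intro μ hμ
    rw [hμ]
    calc Alg.conv μ μ = Alg.conv (Alg.P 1 μ) (Alg.P 1 μ) := by rw [Alg.P_one]
    _ = Alg.P (1 + 1) μ := Alg.P_add 1 1 one_pos one_pos μ
    _ = Alg.P 2 μ := by norm_num
  -- key formula: Φf^[k+1] ρ = Φh^[k+1] (P (2^k) (ρ * T₋₁ρ))
  have key : ∀ k ρ, Φf^[k+1] ρ
      = Φh^[k+1] (Alg.P ((2:ℝ)^k) (Alg.conv ρ (Alg.T (-1) ρ))) := by
    intro k
    induction k with
    | zero =>
        intro ρ
        simp only [pow_zero, Alg.P_one, Function.iterate_one, Function.iterate_succ_apply',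
          Function.iterate_zero_apply]
        rfl
    | succ k ih =>
        intro ρ
        have h2k : (0:ℝ) < 2^k := by positivity
        have hsymν : Alg.T (-1) (Φf^[k+1] ρ) = Φf^[k+1] ρ := by
          rw [ih, ← hTiter, Alg.T_P (-1) _ (by norm_num) h2k, Usym]
        calc Φf^[k+2] ρ = Φf (Φf^[k+1] ρ) := Function.iterate_succ_apply' Φf (k+1) ρ
        _ = Φh (Alg.conv (Φf^[k+1] ρ) (Alg.T (-1) (Φf^[k+1] ρ))) := rfl
        _ = Φh (Alg.P 2 (Φf^[k+1] ρ)) := by rw [sym_conv _ hsymν]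
        _ = Φh (Alg.P 2 (Φh^[k+1] (Alg.P ((2:ℝ)^k) (Alg.conv ρ (Alg.T (-1) ρ))))) := by
              rw [ih]
        _ = Φh (Φh^[k+1] (Alg.P 2 (Alg.P ((2:ℝ)^k) (Alg.conv ρ (Alg.T (-1) ρ))))) := by
              rw [hPiter (k+1) 2 two_pos]
        _ = Φh^[k+2] (Alg.P 2 (Alg.P ((2:ℝ)^k) (Alg.conv ρ (Alg.T (-1) ρ)))) :=
              (Function.iterate_succ_apply' Φh (k+1) _).symm
        _ = Φh^[k+2] (Alg.P ((2:ℝ)^(k+1)) (Alg.conv ρ (Alg.T (-1) ρ))) := by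
              rw [Alg.P_mul 2 _ two_pos h2k, pow_succ, mul_comm]
  obtain ⟨m, rfl⟩ : ∃ m, n = m + 1 := ⟨n - 1, (Nat.succ_pred_eq_of_pos hn).symm⟩
  have h2m : (0:ℝ) < 2^m := by positivity
  ext μ
  constructor
  · rintro ⟨ρ, rfl⟩
    refine ⟨⟨Alg.P ((2:ℝ)^m) (Alg.conv ρ (Alg.T (-1) ρ)), (key m ρ).symm⟩, ?_⟩
    show Alg.T (-1) _ = _
    rw [key m ρ, ← hTiter, Alg.T_P (-1) _ (by norm_num) h2m, Usym]
  · rintro ⟨⟨σ, rfl⟩, hsym⟩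
    have hinjn : Function.Injective (Φh^[m+1]) := Function.Injective.iterate hinj (m+1)
    have hσ : Alg.T (-1) σ = σ := by
      apply hinjn
      rw [hTiter]
      exact hsym
    have h2m1 : (0:ℝ) < 2^(m+1) := by positivity
    refine ⟨Alg.P (((2:ℝ)^(m+1))⁻¹) σ, ?_⟩
    rw [key m]
    congr 1
    have hρsym : Alg.T (-1) (Alg.P (((2:ℝ)^(m+1))⁻¹) σ) = Alg.P (((2:ℝ)^(m+1))⁻¹) σ := by
      rw [Alg.T_P (-1) _ (by norm_num) (by positivity), hσ]
    rw [sym_conv _ hρsym, Alg.P_mul 2 _ two_pos (by positivity),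
      Alg.P_mul ((2:ℝ)^m) _ h2m (by positivity)]
    have : (2:ℝ)^m * (2 * ((2:ℝ)^(m+1))⁻¹) = 1 := by
      field_simp
      ring
    rw [this, Alg.P_one]
end
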